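/- arXiv:0906.2039 — 7 statements merged into one kernel-verified Lean document; each statement's English description precedes it below -/
import Mathlib

section
/- Desnanot–Jacobi identity: Let M be an n×n matrix over a commutative ring with n ≥ 2, and let j₁ < j₂ be row indices and k₁ < k₂ be column indices. Write D[j's; k's] for the minor determinant of M with the indicated rows and columns deleted. Then det(M) · D[j₁,j₂; k₁,k₂] = D[j₁; k₁] · D[j₂; k₂] − D[j₁; k₂] · D[j₂; k₁]. -/
open Matrix

set_option linter.unreachableTactic false
set_option linter.unusedTactic false


lemma DJ.det_updateColumn_single {n : ℕ} {R} [CommRing R] (M : Matrix (Fin (n+1)) (Fin (n+1)) R)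
    (r c : Fin (n+1)) (x : R) :
    (M.updateCol c (Pi.single r x)).det =
      (-1) ^ ((r : ℕ) + (c : ℕ)) * x * (M.submatrix r.succAbove c.succAbove).det := by
  rw [Matrix.det_succ_column _ c, Finset.sum_eq_single r]
  · have hsub : (M.updateCol c (Pi.single r x)).submatrix r.succAbove c.succAbove
        = M.submatrix r.succAbove c.succAbove := by
      ext a b
      simp [Matrix.updateCol_apply, (Fin.succAbove_ne c b)]
    simp [hsub, Matrix.updateCol_apply, mul_assoc]
  · intro i _ hir
    simp [Matrix.updateCol_apply, Pi.single_apply, hir]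
  · simp

lemma DJ.adjugate_cofactor {n : ℕ} {R} [CommRing R] (M : Matrix (Fin (n+1)) (Fin (n+1)) R)
    (j k : Fin (n+1)) :
    adjugate M k j = (-1) ^ ((j : ℕ) + (k : ℕ)) * (M.submatrix j.succAbove k.succAbove).det := by
  rw [Matrix.adjugate_apply, ← Matrix.det_transpose, ← Matrix.updateCol_transpose,
    DJ.det_updateColumn_single, ← Matrix.transpose_submatrix, Matrix.det_transpose,
    add_comm (k : ℕ), mul_one]

lemma DJ.submatrix_updateColumn {n : ℕ} {α β R : Type*} [CommRing R]
    (M : Matrix α (Fin (n+2)) R) (f : β → α)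
    (c : Fin (n+2)) (d : Fin (n+1)) (v : α → R) :
    (M.updateCol (c.succAbove d) v).submatrix f c.succAbove
      = (M.submatrix f c.succAbove).updateCol d (v ∘ f) := by
  ext a b
  simp [Matrix.updateCol_apply, Fin.succAbove_right_inj]

lemma DJ.key {R : Type*} [CommRing R] {n : ℕ}
    (M : Matrix (Fin (n + 2)) (Fin (n + 2)) R)
    (j₁ k₁ : Fin (n + 2)) (j₂ k₂ : Fin (n + 1))
    (hj : (j₁ : ℕ) ≤ (j₂ : ℕ)) (hk : (k₁ : ℕ) ≤ (k₂ : ℕ)) :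
    M.det * (M.det * (M.submatrix (j₁.succAbove ∘ j₂.succAbove) (k₁.succAbove ∘ k₂.succAbove)).det) =
      M.det * ((M.submatrix j₁.succAbove k₁.succAbove).det *
        (M.submatrix (j₁.succAbove j₂).succAbove (k₁.succAbove k₂).succAbove).det -
      (M.submatrix j₁.succAbove (k₁.succAbove k₂).succAbove).det *
        (M.submatrix (j₁.succAbove j₂).succAbove k₁.succAbove).det) := by
  set J₂ := j₁.succAbove j₂ with hJ
  set K₂ := k₁.succAbove k₂ with hK
  have hJv : (J₂ : ℕ) = (j₂ : ℕ) + 1 := by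
    rw [hJ, Fin.succAbove_of_le_castSucc _ _ (by rwa [Fin.le_def, Fin.coe_castSucc]), Fin.val_succ]
  have hKv : (K₂ : ℕ) = (k₂ : ℕ) + 1 := by
    rw [hK, Fin.succAbove_of_le_castSucc _ _ (by rwa [Fin.le_def, Fin.coe_castSucc]), Fin.val_succ]
  have hKne : K₂ ≠ k₁ := Fin.succAbove_ne k₁ k₂
  -- the auxiliary matrix C
  set C : Matrix (Fin (n+2)) (Fin (n+2)) R :=
    ((1 : Matrix (Fin (n+2)) (Fin (n+2)) R).updateCol k₁ (fun i => adjugate M i j₁)).updateCol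
      K₂ (fun i => adjugate M i J₂) with hCdef
  -- M * C
  have hMA : ∀ (j : Fin (n+2)) (i : Fin (n+2)),
      ∑ x, M i x * adjugate M x j = (Pi.single j M.det : Fin (n+2) → R) i := by
    intro j i
    have := congrArg (fun N => N i j) (Matrix.mul_adjugate M)
    simp only [Matrix.mul_apply, Matrix.smul_apply, Matrix.one_apply, smul_eq_mul] at this
    rw [this, Pi.single_apply]
    split <;> simp_all
  have hMC : M * C = (M.updateCol K₂ (Pi.single J₂ M.det)).updateCol k₁
      (Pi.single j₁ M.det) := by
    ext i c
    rcases eq_or_ne c k₁ with rfl | h1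
    · simp [Matrix.mul_apply, hCdef, Matrix.updateCol_apply, hKne, Ne.symm hKne, hMA]
    · rcases eq_or_ne c K₂ with rfl | h2
      · simp [Matrix.mul_apply, hCdef, Matrix.updateCol_apply, h1, hMA]
      · simp only [Matrix.mul_apply, hCdef, Matrix.updateCol_apply, if_neg h1, if_neg h2]
        rw [Finset.sum_eq_single c] <;>
          simp +contextual [Matrix.one_apply, h1, h2] <;>
          try (intro h; simp [h])
  -- det C via Weinstein–Aronszajn
  have hdetC : C.det = adjugate M k₁ j₁ * adjugate M K₂ J₂
      - adjugate M k₁ J₂ * adjugate M K₂ j₁ := by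
    set A : Matrix (Fin (n+2)) (Fin 2) R := fun i a =>
      if a = 0 then adjugate M i j₁ - (1 : Matrix (Fin (n+2)) (Fin (n+2)) R) i k₁
      else adjugate M i J₂ - (1 : Matrix (Fin (n+2)) (Fin (n+2)) R) i K₂ with hA
    set B : Matrix (Fin 2) (Fin (n+2)) R := fun a c =>
      if a = 0 then (1 : Matrix (Fin (n+2)) (Fin (n+2)) R) k₁ c
      else (1 : Matrix (Fin (n+2)) (Fin (n+2)) R) K₂ c with hB
    have hC1 : C = 1 + A * B := by
      ext i c
      simp only [Matrix.add_apply, Matrix.mul_apply]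
      rcases eq_or_ne c k₁ with rfl | h1
      · simp [hCdef, Matrix.updateCol_apply, hKne, Matrix.mul_apply, Fin.sum_univ_two, hA, hB,
          Matrix.one_apply, hKne.symm]
        try ring
      · rcases eq_or_ne c K₂ with rfl | h2
        · simp [hCdef, Matrix.updateCol_apply, h1, Matrix.mul_apply, Fin.sum_univ_two, hA, hB,
            Matrix.one_apply, h1.symm]
          try ring
        · simp [hCdef, Matrix.updateCol_apply, h1, h2, Matrix.mul_apply, Fin.sum_univ_two,
            hA, hB, Matrix.one_apply, h1.symm, h2.symm]
    have h2 : (1 : Matrix (Fin 2) (Fin 2) R) + B * A =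
        !![adjugate M k₁ j₁, adjugate M k₁ J₂; adjugate M K₂ j₁, adjugate M K₂ J₂] := by
      ext a b
      simp only [Matrix.add_apply, Matrix.mul_apply]
      fin_cases a <;> fin_cases b <;>
        simp [Matrix.mul_apply, Fin.sum_univ_succ, hA, hB, Matrix.one_apply, hKne, hKne.symm]
    rw [hC1, Matrix.det_one_add_mul_comm, h2, Matrix.det_fin_two_of]
  -- det (M * C) by double cofactor expansion
  have hdetMC : (M * C).det = ((-1) ^ ((j₁ : ℕ) + (k₁ : ℕ)) * M.det) *
      ((-1) ^ ((j₂ : ℕ) + (k₂ : ℕ)) * M.det *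
        (M.submatrix (j₁.succAbove ∘ j₂.succAbove) (k₁.succAbove ∘ k₂.succAbove)).det) := by
    rw [hMC, DJ.det_updateColumn_single, hK, DJ.submatrix_updateColumn]
    have hsingle : (Pi.single J₂ M.det) ∘ j₁.succAbove = Pi.single j₂ M.det := by
      funext i
      simp [Pi.single_apply, hJ, Fin.succAbove_right_inj]
    rw [hsingle, DJ.det_updateColumn_single, Matrix.submatrix_submatrix]
    try ring
  -- combine
  have hmain := Matrix.det_mul M C
  rw [hdetMC, hdetC] at hmain
  rw [DJ.adjugate_cofactor, DJ.adjugate_cofactor, DJ.adjugate_cofactor, DJ.adjugate_cofactor]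
    at hmain
  have hsign : ∀ x y : R, ((-1 : R)) ^ ((j₁ : ℕ) + (k₁ : ℕ) + ((j₂ : ℕ) + (k₂ : ℕ))) * x =
      ((-1 : R)) ^ ((j₁ : ℕ) + (k₁ : ℕ) + ((j₂ : ℕ) + (k₂ : ℕ))) * y → x = y := by
    intro x y h
    have := congrArg (fun z => ((-1 : R)) ^ ((j₁ : ℕ) + (k₁ : ℕ) + ((j₂ : ℕ) + (k₂ : ℕ))) * z) h
    simpa [← mul_assoc, ← pow_add, ← two_mul, pow_mul, neg_one_sq] using this
  apply hsign
  calc ((-1 : R)) ^ ((j₁ : ℕ) + (k₁ : ℕ) + ((j₂ : ℕ) + (k₂ : ℕ))) *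
      (M.det * (M.det * (M.submatrix (j₁.succAbove ∘ j₂.succAbove)
        (k₁.succAbove ∘ k₂.succAbove)).det)) = ((-1) ^ ((j₁ : ℕ) + (k₁ : ℕ)) * M.det) *
      ((-1) ^ ((j₂ : ℕ) + (k₂ : ℕ)) * M.det *
        (M.submatrix (j₁.succAbove ∘ j₂.succAbove) (k₁.succAbove ∘ k₂.succAbove)).det) := by
        rw [pow_add]; ring
    _ = M.det * ((-1) ^ ((j₁ : ℕ) + (k₁ : ℕ)) * (M.submatrix j₁.succAbove k₁.succAbove).det *
          ((-1) ^ ((J₂ : ℕ) + (K₂ : ℕ)) * (M.submatrix J₂.succAbove K₂.succAbove).det) -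
        (-1) ^ ((J₂ : ℕ) + (k₁ : ℕ)) * (M.submatrix J₂.succAbove k₁.succAbove).det *
          ((-1) ^ ((j₁ : ℕ) + (K₂ : ℕ)) * (M.submatrix j₁.succAbove K₂.succAbove).det)) :=
        hmain
    _ = ((-1 : R)) ^ ((j₁ : ℕ) + (k₁ : ℕ) + ((j₂ : ℕ) + (k₂ : ℕ))) *
      (M.det * ((M.submatrix j₁.succAbove k₁.succAbove).det *
        (M.submatrix J₂.succAbove K₂.succAbove).det -
      (M.submatrix j₁.succAbove K₂.succAbove).det *
        (M.submatrix J₂.succAbove k₁.succAbove).det)) := by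
        rw [hJv, hKv]
        simp only [pow_add, pow_succ]
        ring


/-- **Desnanot–Jacobi identity.** For an `(n+2)×(n+2)` matrix `M` over a commutative ring,
with rows `j₁ < J₂` (encoded as `J₂ = j₁.succAbove j₂` with `(j₁ : ℕ) ≤ (j₂ : ℕ)`) and
columns `k₁ < K₂` similarly,
`det M * D[j₁,J₂;k₁,K₂] = D[j₁;k₁]·D[J₂;K₂] − D[j₁;K₂]·D[J₂;k₁]`. -/
theorem desnanot_jacobi {R : Type*} [CommRing R] {n : ℕ}
    (M : Matrix (Fin (n + 2)) (Fin (n + 2)) R)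
    (j₁ k₁ : Fin (n + 2)) (j₂ k₂ : Fin (n + 1))
    (hj : (j₁ : ℕ) ≤ (j₂ : ℕ)) (hk : (k₁ : ℕ) ≤ (k₂ : ℕ)) :
    M.det * (M.submatrix (j₁.succAbove ∘ j₂.succAbove) (k₁.succAbove ∘ k₂.succAbove)).det =
      (M.submatrix j₁.succAbove k₁.succAbove).det *
        (M.submatrix (j₁.succAbove j₂).succAbove (k₁.succAbove k₂).succAbove).det -
      (M.submatrix j₁.succAbove (k₁.succAbove k₂).succAbove).det *
        (M.submatrix (j₁.succAbove j₂).succAbove k₁.succAbove).det := by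
  set X := Matrix.mvPolynomialX (Fin (n + 2)) (Fin (n + 2)) ℤ with hX
  set f : MvPolynomial (Fin (n + 2) × Fin (n + 2)) ℤ →+* R :=
    MvPolynomial.eval₂Hom (Int.castRingHom R) (fun p => M p.1 p.2) with hf
  have hXM : X.map f = M := Matrix.mvPolynomialX_map_eval₂ _ M
  have hXkey : X.det * (X.submatrix (j₁.succAbove ∘ j₂.succAbove)
      (k₁.succAbove ∘ k₂.succAbove)).det =
      (X.submatrix j₁.succAbove k₁.succAbove).det *
        (X.submatrix (j₁.succAbove j₂).succAbove (k₁.succAbove k₂).succAbove).det -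
      (X.submatrix j₁.succAbove (k₁.succAbove k₂).succAbove).det *
        (X.submatrix (j₁.succAbove j₂).succAbove k₁.succAbove).det := by
    have hcancel := DJ.key X j₁ k₁ j₂ k₂ hj hk
    exact mul_left_cancel₀ (Matrix.det_mvPolynomialX_ne_zero (Fin (n + 2)) ℤ) hcancel
  have := congrArg f hXkey
  simp only [_root_.map_mul, map_sub, RingHom.map_det, RingHom.mapMatrix_apply, ← Matrix.submatrix_map, hXM] at this
  exact this
end

section
/- Plücker three-term identity (column version): Let A be an n×(n+2) matrix over a commutative ring, and for column indices k₁ < k₂ < k₃ < k₄ let D[k,k'] denote the determinant of the n×n matrix obtained from A by deleting columns k and k'. Then D[k₁,k₂]·D[k₃,k₄] − D[k₁,k₃]·D[k₂,k₄] + D[k₁,k₄]·D[k₂,k₃] = 0. -/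
/-- The strictly monotone map `Fin n → Fin (n + 2)` skipping the indices `a` and `b`
(for `a < b`). -/
def skip2 {n : ℕ} (a b : Fin (n + 2)) (i : Fin n) : Fin (n + 2) :=
  if (i : ℕ) < (a : ℕ) then ⟨(i : ℕ), by have := i.isLt; omega⟩
  else if (i : ℕ) + 1 < (b : ℕ) then ⟨(i : ℕ) + 1, by have := i.isLt; omega⟩
  else ⟨(i : ℕ) + 2, by have := i.isLt; omega⟩

namespace PlueckerAux

open Matrix Equiv

variable {n : ℕ}

/-- The cycle sending `x ↦ x+1` for `p ≤ x < last`, `last ↦ p`, fixing `x < p`. -/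
def insC (p : Fin (n + 2)) : Equiv.Perm (Fin (n + 2)) :=
  Fin.revPerm * (Fin.cycleRange p.rev)⁻¹ * Fin.revPerm

lemma inv_apply_eq {σ : Equiv.Perm (Fin (n + 2))} {x y : Fin (n + 2)} (h : σ y = x) :
    σ⁻¹ x = y := by rw [← h, Equiv.Perm.inv_def, Equiv.symm_apply_apply]

lemma insC_last (p : Fin (n + 2)) : insC p (Fin.last (n + 1)) = p := by
  simp only [insC, Equiv.Perm.mul_apply, Fin.revPerm_apply, Fin.rev_last]
  rw [inv_apply_eq (Fin.cycleRange_self p.rev), Fin.rev_rev]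

lemma insC_lt {p x : Fin (n + 2)} (h : x < p) : insC p x = x := by
  simp only [insC, Equiv.Perm.mul_apply, Fin.revPerm_apply]
  rw [inv_apply_eq (Fin.cycleRange_of_gt (Fin.rev_lt_rev.mpr h)), Fin.rev_rev]

lemma insC_ge {p x : Fin (n + 2)} (h1 : p ≤ x) (h3 : (x : ℕ) + 1 < n + 2) :
    insC p x = ⟨(x : ℕ) + 1, h3⟩ := by
  simp only [insC, Equiv.Perm.mul_apply, Fin.revPerm_apply]
  have hp : (p : ℕ) ≤ (x : ℕ) := h1
  have hlt : (⟨(x : ℕ) + 1, h3⟩ : Fin (n + 2)).rev < p.rev := by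
    rw [Fin.lt_def, Fin.val_rev, Fin.val_rev, Fin.val_mk]; omega
  have hcyc : Fin.cycleRange p.rev (⟨(x : ℕ) + 1, h3⟩ : Fin (n + 2)).rev = x.rev := by
    rw [Fin.cycleRange_of_lt hlt]
    have hne : (⟨(x : ℕ) + 1, h3⟩ : Fin (n + 2)).rev ≠ Fin.last (n + 1) := by
      rw [Fin.ne_iff_vne, Fin.val_rev, Fin.val_last, Fin.val_mk]; omega
    apply Fin.ext
    rw [Fin.val_add_one, if_neg hne, Fin.val_rev, Fin.val_rev, Fin.val_mk]
    omega
  rw [inv_apply_eq hcyc, Fin.rev_rev]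

/-- The index `n` as an element of `Fin (n+2)`. -/
def pn : Fin (n + 2) := ⟨n, by omega⟩

lemma pn_ne_last : (pn : Fin (n + 2)) ≠ Fin.last (n + 1) := by
  rw [Fin.ne_iff_vne]; simp [pn]

/-- The permutation of `Fin (n+2)` sending the first `n` indices to `skip2 a b` (in order),
`n ↦ a` and `n+1 ↦ b`. -/
def sigma2 (a b : Fin (n + 2)) : Equiv.Perm (Fin (n + 2)) :=
  insC b * insC a * Equiv.swap pn (Fin.last (n + 1))

lemma sigma2_castAdd {a b : Fin (n + 2)} (hab : a < b) (i : Fin n) :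
    sigma2 a b (Fin.castAdd 2 i) = skip2 a b i := by
  have hin : (i : ℕ) < n := i.isLt
  have hc : (Fin.castAdd 2 i : Fin (n + 2)) = ⟨(i : ℕ), by omega⟩ := rfl
  have h1 : (⟨(i : ℕ), by omega⟩ : Fin (n + 2)) ≠ pn := by
    rw [Fin.ne_iff_vne, Fin.val_mk]; simp only [pn]; omega
  have h2 : (⟨(i : ℕ), by omega⟩ : Fin (n + 2)) ≠ Fin.last (n + 1) := by
    rw [Fin.ne_iff_vne, Fin.val_mk, Fin.val_last]; omega
  simp only [sigma2, Equiv.Perm.mul_apply, hc]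
  rw [Equiv.swap_apply_of_ne_of_ne h1 h2]
  by_cases hia : (i : ℕ) < (a : ℕ)
  · rw [insC_lt (show (⟨(i : ℕ), by omega⟩ : Fin (n + 2)) < a by
        rw [Fin.lt_def, Fin.val_mk]; omega),
      insC_lt (show (⟨(i : ℕ), by omega⟩ : Fin (n + 2)) < b by
        rw [Fin.lt_def, Fin.val_mk]; have := Fin.lt_def.mp hab; omega)]
    simp only [skip2, if_pos hia]
  · push_neg at hia
    rw [insC_ge (show a ≤ (⟨(i : ℕ), by omega⟩ : Fin (n + 2)) by
        simp only [Fin.le_def, Fin.val_mk]; omega) (by simp only [Fin.val_mk]; omega)]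
    simp only [Fin.val_mk]
    by_cases hib : (i : ℕ) + 1 < (b : ℕ)
    · rw [insC_lt (show (⟨(i : ℕ) + 1, by omega⟩ : Fin (n + 2)) < b by
          rw [Fin.lt_def, Fin.val_mk]; omega)]
      simp only [skip2, if_neg (by omega : ¬ (i : ℕ) < (a : ℕ)), if_pos hib]
    · push_neg at hib
      rw [insC_ge (show b ≤ (⟨(i : ℕ) + 1, by omega⟩ : Fin (n + 2)) by
          simp only [Fin.le_def, Fin.val_mk]; omega) (by simp only [Fin.val_mk]; omega)]
      simp only [Fin.val_mk]
      simp only [skip2, if_neg (by omega : ¬ (i : ℕ) < (a : ℕ)),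
        if_neg (by omega : ¬ (i : ℕ) + 1 < (b : ℕ))]

lemma sigma2_pn {a b : Fin (n + 2)} (hab : a < b) : sigma2 a b pn = a := by
  simp only [sigma2, Equiv.Perm.mul_apply, Equiv.swap_apply_left, insC_last, insC_lt hab]

lemma sigma2_last {a b : Fin (n + 2)} (hab : a < b) : sigma2 a b (Fin.last (n + 1)) = b := by
  have hb : (b : ℕ) ≤ n + 1 := by omega
  have ha : (a : ℕ) ≤ n := by have := Fin.lt_def.mp hab; omega
  simp only [sigma2, Equiv.Perm.mul_apply, Equiv.swap_apply_right]
  rw [insC_ge (show a ≤ pn by rw [Fin.le_def]; simpa [pn]) (by simp [pn])]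
  have : (⟨(pn : Fin (n+2)).val + 1, by simp [pn]⟩ : Fin (n + 2)) = Fin.last (n + 1) := by
    apply Fin.ext; simp [pn]
  rw [this, insC_last]

lemma sign_sigma2 (a b : Fin (n + 2)) :
    Equiv.Perm.sign (sigma2 a b) =
      -(Equiv.Perm.sign (insC a) * Equiv.Perm.sign (insC b)) := by
  rw [sigma2, _root_.map_mul, _root_.map_mul, Equiv.Perm.sign_swap pn_ne_last]
  rw [mul_neg_one, mul_comm]

section KL

variable {R : Type*} [CommRing R]

lemma natAdd_zero : (Fin.natAdd n (0 : Fin 2)) = (pn : Fin (n + 2)) := by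
  apply Fin.ext; simp [pn]

lemma natAdd_one : (Fin.natAdd n (1 : Fin 2)) = Fin.last (n + 1) := by
  apply Fin.ext; simp

lemma castAdd_ne_pn (i : Fin n) : (Fin.castAdd 2 i : Fin (n + 2)) ≠ pn := by
  rw [Fin.ne_iff_vne]; simp only [Fin.coe_castAdd, pn]; exact Nat.ne_of_lt i.isLt

lemma castAdd_ne_last (i : Fin n) : (Fin.castAdd 2 i : Fin (n + 2)) ≠ Fin.last (n + 1) := by
  rw [Fin.ne_iff_vne]; simp only [Fin.coe_castAdd, Fin.val_last]; have := i.isLt; omega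

/-- Key determinantal identity (a form of Jacobi's theorem on the 2×2 minor of the
adjugate at the last two rows/columns). -/
lemma KL (N : Matrix (Fin (n + 2)) (Fin (n + 2)) R) :
    N.det * (N.det * (N.submatrix (Fin.castAdd 2) (Fin.castAdd 2)).det) =
      N.det * (N.adjugate pn pn * N.adjugate (Fin.last (n + 1)) (Fin.last (n + 1)) -
        N.adjugate (Fin.last (n + 1)) pn * N.adjugate pn (Fin.last (n + 1))) := by
  classical
  set q : Fin (n + 2) := Fin.last (n + 1) with hq
  have hpq : (pn : Fin (n + 2)) ≠ q := pn_ne_last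
  set B : Matrix (Fin (n + 2)) (Fin (n + 2)) R :=
    ((1 : Matrix (Fin (n + 2)) (Fin (n + 2)) R).updateCol pn
      (fun i => N.adjugate i pn)).updateCol q (fun i => N.adjugate i q) with hB
  set E : Matrix (Fin (n + 2)) (Fin (n + 2)) R :=
    ((N.updateCol pn (Pi.single pn (1 : R)))).updateCol q (Pi.single q (1 : R)) with hE
  -- columns of B
  have hBcol : ∀ k j, B k j = if j = q then N.adjugate k q else if j = pn then N.adjugate k pn
      else (1 : Matrix (Fin (n + 2)) (Fin (n + 2)) R) k j := by
    intro k j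
    by_cases h1 : j = q
    · subst h1; rw [if_pos rfl, hB, Matrix.updateCol_self]
    · rw [if_neg h1, hB, Matrix.updateCol_ne h1]
      by_cases h2 : j = pn
      · subst h2; rw [if_pos rfl, Matrix.updateCol_self]
      · rw [if_neg h2, Matrix.updateCol_ne h2]
  -- N * B
  have h1 : N * B = (N.updateCol pn (Pi.single pn N.det)).updateCol q
      (Pi.single q N.det) := by
    have hadj := Matrix.mul_adjugate N
    ext i j
    rw [Matrix.mul_apply]
    by_cases hjq : j = q
    · subst hjq
      have hcol : ∀ k, B k q = N.adjugate k q := fun k => by rw [hBcol, if_pos rfl]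
      rw [Finset.sum_congr rfl fun k _ => by rw [hcol k]]
      have h2 := congrFun (congrFun hadj i) q
      rw [Matrix.mul_apply] at h2
      rw [h2, Matrix.updateCol_self, Matrix.smul_apply, Matrix.one_apply, Pi.single_apply,
        smul_eq_mul, mul_ite, mul_one, mul_zero]
    · by_cases hjn : j = pn
      · subst hjn
        have hcol : ∀ k, B k pn = N.adjugate k pn := fun k => by
          rw [hBcol, if_neg hjq, if_pos rfl]
        rw [Finset.sum_congr rfl fun k _ => by rw [hcol k]]
        have h2 := congrFun (congrFun hadj i) pn
        rw [Matrix.mul_apply] at h2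
        rw [h2, Matrix.updateCol_ne hjq, Matrix.updateCol_self, Matrix.smul_apply,
          Matrix.one_apply, Pi.single_apply, smul_eq_mul, mul_ite, mul_one, mul_zero]
      · have hcol : ∀ k, B k j = (1 : Matrix (Fin (n + 2)) (Fin (n + 2)) R) k j := fun k => by
          rw [hBcol, if_neg hjq, if_neg hjn]
        rw [Finset.sum_congr rfl fun k _ => by rw [hcol k]]
        have h2 := congrFun (congrFun (mul_one N) i) j
        rw [Matrix.mul_apply] at h2
        rw [h2, Matrix.updateCol_ne hjq, Matrix.updateCol_ne hjn]
  -- determinant of B via blocks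
  have e2 : Fin n ⊕ Fin 2 ≃ Fin (n + 2) := finSumFinEquiv
  have hcastinj : ∀ i j : Fin n, (Fin.castAdd 2 i = Fin.castAdd 2 j) ↔ i = j := by
    intro i j; rw [Fin.ext_iff, Fin.ext_iff]; simp
  have hdetB : B.det = N.adjugate pn pn * N.adjugate q q - N.adjugate pn q * N.adjugate q pn := by
    have hblock : B.submatrix (finSumFinEquiv (m := n) (n := 2))
        (finSumFinEquiv (m := n) (n := 2)) =
        Matrix.fromBlocks (1 : Matrix (Fin n) (Fin n) R)
          (B.submatrix (Fin.castAdd 2) (Fin.natAdd n)) 0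
          (B.submatrix (Fin.natAdd n) (Fin.natAdd n)) := by
      ext i j
      rcases i with i | i <;> rcases j with j | j
      · simp only [Matrix.submatrix_apply, finSumFinEquiv_apply_left,
          Matrix.fromBlocks_apply₁₁]
        rw [hBcol, if_neg (castAdd_ne_last j), if_neg (castAdd_ne_pn j), Matrix.one_apply,
          Matrix.one_apply]
        simp only [hcastinj]
      · simp only [Matrix.submatrix_apply, finSumFinEquiv_apply_left,
          finSumFinEquiv_apply_right, Matrix.fromBlocks_apply₁₂]
      · simp only [Matrix.submatrix_apply, finSumFinEquiv_apply_left,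
          finSumFinEquiv_apply_right, Matrix.fromBlocks_apply₂₁, Matrix.zero_apply]
        rw [hBcol, if_neg (castAdd_ne_last j), if_neg (castAdd_ne_pn j)]
        apply Matrix.one_apply_ne
        rw [Fin.ne_iff_vne]
        simp only [Fin.coe_castAdd, Fin.coe_natAdd]
        have := j.isLt; omega
      · simp only [Matrix.submatrix_apply, finSumFinEquiv_apply_right,
          Matrix.fromBlocks_apply₂₂]
    have hdet := Matrix.det_submatrix_equiv_self (finSumFinEquiv (m := n) (n := 2)) B
    rw [hblock, Matrix.det_fromBlocks_zero₂₁, Matrix.det_one, one_mul] at hdet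
    rw [← hdet, Matrix.det_fin_two]
    simp only [Matrix.submatrix_apply, natAdd_zero, natAdd_one, ← hq]
    rw [hBcol, hBcol, hBcol, hBcol, if_neg hpq, if_pos rfl, if_pos rfl, if_pos rfl,
      if_neg hpq, if_pos rfl]
  -- determinant of E via blocks
  have hdetE : E.det = (N.submatrix (Fin.castAdd 2) (Fin.castAdd 2)).det := by
    have hblock : E.submatrix (finSumFinEquiv (m := n) (n := 2))
        (finSumFinEquiv (m := n) (n := 2)) =
        Matrix.fromBlocks (N.submatrix (Fin.castAdd 2) (Fin.castAdd 2)) 0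
          (E.submatrix (Fin.natAdd n) (Fin.castAdd 2))
          (E.submatrix (Fin.natAdd n) (Fin.natAdd n)) := by
      ext i j
      rcases i with i | i <;> rcases j with j | j
      · simp only [Matrix.submatrix_apply, finSumFinEquiv_apply_left,
          Matrix.fromBlocks_apply₁₁]
        rw [hE, Matrix.updateCol_ne (castAdd_ne_last j), Matrix.updateCol_ne
          (castAdd_ne_pn j)]
      · simp only [Matrix.submatrix_apply, finSumFinEquiv_apply_left,
          finSumFinEquiv_apply_right, Matrix.fromBlocks_apply₁₂, Matrix.zero_apply]
        have hj : Fin.natAdd n j = (pn : Fin (n + 2)) ∨ Fin.natAdd n j = Fin.last (n + 1) := by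
          have hlt := j.isLt
          by_cases h : (j : ℕ) = 0
          · left; apply Fin.ext; simp [pn, h]
          · right; apply Fin.ext; simp only [Fin.coe_natAdd, Fin.val_last]; omega
        rcases hj with hj | hj <;> rw [hj]
        · rw [hE, Matrix.updateCol_ne hpq, Matrix.updateCol_self,
            Pi.single_eq_of_ne (castAdd_ne_pn i)]
        · rw [hE, ← hq, Matrix.updateCol_self,
            Pi.single_eq_of_ne (fun h => (castAdd_ne_last i) (hq ▸ h))]
      · simp only [Matrix.submatrix_apply, finSumFinEquiv_apply_left,
          finSumFinEquiv_apply_right, Matrix.fromBlocks_apply₂₁]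
      · simp only [Matrix.submatrix_apply, finSumFinEquiv_apply_right,
          Matrix.fromBlocks_apply₂₂]
    have hdet := Matrix.det_submatrix_equiv_self (finSumFinEquiv (m := n) (n := 2)) E
    rw [hblock, Matrix.det_fromBlocks_zero₁₂] at hdet
    have hone : (E.submatrix (Fin.natAdd n) (Fin.natAdd n)).det = 1 := by
      rw [Matrix.det_fin_two]
      simp only [Matrix.submatrix_apply, natAdd_zero, natAdd_one, ← hq]
      rw [hE]
      rw [Matrix.updateCol_ne hpq, Matrix.updateCol_self, Matrix.updateCol_self,
        Matrix.updateCol_self, Matrix.updateCol_ne hpq, Matrix.updateCol_self]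
      rw [Pi.single_eq_same, Pi.single_eq_same, Pi.single_eq_of_ne hpq,
        Pi.single_eq_of_ne (Ne.symm hpq)]
      ring
    rw [hone, mul_one] at hdet
    exact hdet.symm
  -- commuting the two column updates
  have hcomm : ∀ (X : Matrix (Fin (n + 2)) (Fin (n + 2)) R) (u v : Fin (n + 2) → R),
      (X.updateCol pn u).updateCol q v = (X.updateCol q v).updateCol pn u := by
    intro X u v
    ext i j
    simp only [Matrix.updateCol_apply]
    by_cases h1 : j = q <;> by_cases h2 : j = pn
    · exact absurd (h2.symm.trans h1) hpq
    · simp [h1, h2, Ne.symm hpq]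
    · simp [h1, h2, hpq]
    · simp [h1, h2]
  have hsingle : ∀ c : Fin (n + 2), Pi.single c N.det = N.det • (Pi.single c (1 : R) : Fin (n + 2) → R) := by
    intro c; funext x
    by_cases h : x = c <;> simp [Pi.single_apply, h]
  -- assemble
  have hmul : N.det * B.det = ((N.updateCol pn (Pi.single pn N.det)).updateCol q
      (Pi.single q N.det)).det := by rw [← h1, Matrix.det_mul]
  rw [hsingle q, Matrix.det_updateCol_smul, hcomm, hsingle pn,
    Matrix.det_updateCol_smul, ← hcomm, ← hE, hdetE] at hmul
  rw [← mul_assoc, mul_comm N.det N.det, mul_assoc, ← hmul, hdetB]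
  ring


/-- Jacobi-type identity in arbitrary column positions `a < b`. -/
lemma KL2 (M : Matrix (Fin (n + 2)) (Fin (n + 2)) R) {a b : Fin (n + 2)} (hab : a < b) :
    M.det * (M.det * (M.submatrix (Fin.castAdd 2) (skip2 a b)).det) =
      M.det * (((Equiv.Perm.sign (sigma2 a b) : ℤ) : R) *
        (M.adjugate a pn * M.adjugate b (Fin.last (n + 1)) -
         M.adjugate b pn * M.adjugate a (Fin.last (n + 1)))) := by
  classical
  have hs2 : ((Equiv.Perm.sign (sigma2 a b) : ℤ) : R) *
      ((Equiv.Perm.sign (sigma2 a b) : ℤ) : R) = 1 := by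
    rw [← Int.cast_mul, ← Units.val_mul, Int.units_mul_self, Units.val_one, Int.cast_one]
  have hsign : (M.submatrix id ⇑(sigma2 a b)).det =
      ((Equiv.Perm.sign (sigma2 a b) : ℤ) : R) * M.det := Matrix.det_permute' _ M
  have hsub : (M.submatrix id ⇑(sigma2 a b)).submatrix (Fin.castAdd 2) (Fin.castAdd 2) =
      M.submatrix (Fin.castAdd 2) (skip2 a b) := by
    ext i j
    simp only [Matrix.submatrix_apply, id_eq]
    rw [sigma2_castAdd hab j]
  have hadjN : ∀ j c : Fin (n + 2), (M.submatrix id ⇑(sigma2 a b)).adjugate j c =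
      ((Equiv.Perm.sign (sigma2 a b) : ℤ) : R) * M.adjugate (sigma2 a b j) c := by
    intro j c
    rw [Matrix.adjugate_apply, Matrix.adjugate_apply]
    have hrow : (M.submatrix id ⇑(sigma2 a b)).updateRow c (Pi.single j 1) =
        (M.updateRow c (Pi.single (sigma2 a b j) (1 : R))).submatrix id ⇑(sigma2 a b) := by
      ext x y
      by_cases hx : x = c
      · subst hx
        simp only [Matrix.submatrix_apply, id_eq, Matrix.updateRow_self]
        simp only [Pi.single_apply, EmbeddingLike.apply_eq_iff_eq]
      · simp only [Matrix.updateRow_ne hx, Matrix.submatrix_apply, id_eq]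
    rw [hrow, Matrix.det_permute']
  have h := KL (M.submatrix id ⇑(sigma2 a b))
  rw [hsub, hsign, hadjN, hadjN, hadjN, hadjN, sigma2_pn hab, sigma2_last hab] at h
  linear_combination h - (M.det * (M.det *
      (M.submatrix (Fin.castAdd 2) (skip2 a b)).det) - M.det *
      (((Equiv.Perm.sign (sigma2 a b) : ℤ) : R) *
        (M.adjugate a pn * M.adjugate b (Fin.last (n + 1)) -
         M.adjugate b pn * M.adjugate a (Fin.last (n + 1))))) * hs2

end KL

section Generic

/-- The generic `(n+2) × (n+2)` matrix. -/
noncomputable def genM (n : ℕ) :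
    Matrix (Fin (n + 2)) (Fin (n + 2)) (MvPolynomial (Fin (n + 2) × Fin (n + 2)) ℤ) :=
  Matrix.of fun i j => MvPolynomial.X (i, j)

lemma genM_det_ne_zero (n : ℕ) : (genM n).det ≠ 0 := by
  intro h
  have h2 := congrArg (MvPolynomial.eval
    (fun v : Fin (n + 2) × Fin (n + 2) => if v.1 = v.2 then (1 : ℤ) else 0)) h
  rw [map_zero, RingHom.map_det] at h2
  have h3 : (MvPolynomial.eval
      (fun v : Fin (n + 2) × Fin (n + 2) => if v.1 = v.2 then (1 : ℤ) else 0)).mapMatrix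
      (genM n) = (1 : Matrix (Fin (n + 2)) (Fin (n + 2)) ℤ) := by
    ext i j
    simp [RingHom.mapMatrix_apply, Matrix.map_apply, genM, Matrix.one_apply]
  rw [h3, Matrix.det_one] at h2
  exact one_ne_zero h2

lemma generic_pluecker {n : ℕ} (k₁ k₂ k₃ k₄ : Fin (n + 2))
    (h12 : k₁ < k₂) (h23 : k₂ < k₃) (h34 : k₃ < k₄) :
    ((genM n).submatrix (Fin.castAdd 2) (skip2 k₁ k₂)).det *
        ((genM n).submatrix (Fin.castAdd 2) (skip2 k₃ k₄)).det -
      ((genM n).submatrix (Fin.castAdd 2) (skip2 k₁ k₃)).det *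
        ((genM n).submatrix (Fin.castAdd 2) (skip2 k₂ k₄)).det +
      ((genM n).submatrix (Fin.castAdd 2) (skip2 k₁ k₄)).det *
        ((genM n).submatrix (Fin.castAdd 2) (skip2 k₂ k₃)).det = 0 := by
  classical
  set R₀ := MvPolynomial (Fin (n + 2) × Fin (n + 2)) ℤ with hR₀
  set M := genM n with hM
  set D : Fin (n + 2) → Fin (n + 2) → R₀ :=
    fun a b => (M.submatrix (Fin.castAdd 2) (skip2 a b)).det with hD
  set u : Fin (n + 2) → R₀ := fun x => M.adjugate x pn with hu
  set v : Fin (n + 2) → R₀ := fun x => M.adjugate x (Fin.last (n + 1)) with hv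
  set e : Fin (n + 2) → R₀ := fun p => ((Equiv.Perm.sign (insC p) : ℤ) : R₀) with he
  have hdM : M.det ≠ 0 := genM_det_ne_zero n
  have hsgn : ∀ a b : Fin (n + 2), ((Equiv.Perm.sign (sigma2 a b) : ℤ) : R₀) =
      -(e a * e b) := by
    intro a b
    rw [sign_sigma2, Units.val_neg, Int.cast_neg, Units.val_mul, Int.cast_mul]
  have key : ∀ {a b : Fin (n + 2)}, a < b →
      M.det * D a b = -(e a * e b) * (u a * v b - u b * v a) := by
    intro a b hab
    have h := mul_left_cancel₀ hdM (KL2 M hab)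
    rw [hsgn] at h
    exact h
  have h13 : k₁ < k₃ := h12.trans h23
  have h24 : k₂ < k₄ := h23.trans h34
  have h14 : k₁ < k₄ := h13.trans h34
  have e12 := key h12
  have e34 := key h34
  have e13 := key h13
  have e24 := key h24
  have e14 := key h14
  have e23 := key h23
  have hexpr : M.det * (M.det *
      (D k₁ k₂ * D k₃ k₄ - D k₁ k₃ * D k₂ k₄ + D k₁ k₄ * D k₂ k₃)) = 0 := by
    linear_combination (M.det * D k₃ k₄) * e12 +
      (-(e k₁ * e k₂) * (u k₁ * v k₂ - u k₂ * v k₁)) * e34 -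
      (M.det * D k₂ k₄) * e13 -
      (-(e k₁ * e k₃) * (u k₁ * v k₃ - u k₃ * v k₁)) * e24 +
      (M.det * D k₂ k₃) * e14 +
      (-(e k₁ * e k₄) * (u k₁ * v k₄ - u k₄ * v k₁)) * e23
  have h1 := mul_left_cancel₀ hdM (hexpr.trans (mul_zero M.det).symm)
  exact mul_left_cancel₀ hdM (h1.trans (mul_zero M.det).symm)

end Generic

end PlueckerAux

/-- **Plücker three-term identity (column version).** For an `n × (n+2)` matrix `A` over a
commutative ring and columns `k₁ < k₂ < k₃ < k₄`, with `D[k,k']` the determinant of `A`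
with columns `k, k'` deleted:
`D[k₁,k₂]·D[k₃,k₄] − D[k₁,k₃]·D[k₂,k₄] + D[k₁,k₄]·D[k₂,k₃] = 0`. -/
theorem pluecker_columns {R : Type*} [CommRing R] {n : ℕ}
    (A : Matrix (Fin n) (Fin (n + 2)) R)
    (k₁ k₂ k₃ k₄ : Fin (n + 2)) (h12 : k₁ < k₂) (h23 : k₂ < k₃) (h34 : k₃ < k₄) :
    (A.submatrix id (skip2 k₁ k₂)).det * (A.submatrix id (skip2 k₃ k₄)).det -
      (A.submatrix id (skip2 k₁ k₃)).det * (A.submatrix id (skip2 k₂ k₄)).det +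
      (A.submatrix id (skip2 k₁ k₄)).det * (A.submatrix id (skip2 k₂ k₃)).det = 0 := by
  classical
  set φ : MvPolynomial (Fin (n + 2) × Fin (n + 2)) ℤ →+* R :=
    MvPolynomial.eval₂Hom (Int.castRingHom R)
      (fun v => if h : (v.1 : ℕ) < n then A ⟨(v.1 : ℕ), h⟩ v.2 else 0) with hφ
  have hmap : ∀ f : Fin n → Fin (n + 2),
      φ.mapMatrix ((PlueckerAux.genM n).submatrix (Fin.castAdd 2) f) = A.submatrix id f := by
    intro f
    ext i j
    simp only [RingHom.mapMatrix_apply, Matrix.map_apply, Matrix.submatrix_apply,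
      PlueckerAux.genM, Matrix.of_apply, hφ, MvPolynomial.eval₂Hom_X', id_eq]
    rw [dif_pos (show ((Fin.castAdd 2 i : Fin (n + 2)) : ℕ) < n from i.isLt)]
    congr 1
  have hgen := PlueckerAux.generic_pluecker k₁ k₂ k₃ k₄ h12 h23 h34
  have h0 := congrArg φ hgen
  rw [map_zero] at h0
  simp only [map_add, map_sub, map_mul, RingHom.map_det, hmap] at h0
  exact h0
end

section
/- Mixed Plücker identity: Let A be an (n+1)×n matrix over a commutative ring, let j₁ < j₂ < j₃ be row indices and k₁ a column index. Writing D[rows; cols] for the determinant of A with the indicated rows and columns removed, one has D[j₁; ]·D[j₂,j₃; k₁] − D[j₂; ]·D[j₁,j₃; k₁] + D[j₃; ]·D[j₁,j₂; k₁] = 0. -/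
/-- The strictly monotone map `Fin n → Fin (n + 3)` skipping `a`, `b`, `c` (for `a < b < c`). -/
def skip3 {n : ℕ} (a b c : Fin (n + 3)) (i : Fin n) : Fin (n + 3) :=
  if (i : ℕ) < (a : ℕ) then ⟨(i : ℕ), by have := i.isLt; omega⟩
  else if (i : ℕ) + 1 < (b : ℕ) then ⟨(i : ℕ) + 1, by have := i.isLt; omega⟩
  else if (i : ℕ) + 2 < (c : ℕ) then ⟨(i : ℕ) + 2, by have := i.isLt; omega⟩
  else ⟨(i : ℕ) + 3, by have := i.isLt; omega⟩

lemma coe_skip2 {n : ℕ} (a b : Fin (n + 2)) (i : Fin n) :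
    ((skip2 a b i : Fin (n+2)) : ℕ) =
      if (i : ℕ) < (a : ℕ) then (i : ℕ)
      else if (i : ℕ) + 1 < (b : ℕ) then (i : ℕ) + 1 else (i : ℕ) + 2 := by
  unfold skip2; split_ifs <;> rfl

lemma coe_skip3 {n : ℕ} (a b c : Fin (n + 3)) (i : Fin n) :
    ((skip3 a b c i : Fin (n+3)) : ℕ) =
      if (i : ℕ) < (a : ℕ) then (i : ℕ)
      else if (i : ℕ) + 1 < (b : ℕ) then (i : ℕ) + 1
      else if (i : ℕ) + 2 < (c : ℕ) then (i : ℕ) + 2 else (i : ℕ) + 3 := by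
  unfold skip3; split_ifs <;> rfl

lemma coe_succAbove' {n : ℕ} (p : Fin (n + 1)) (i : Fin n) :
    ((p.succAbove i : Fin (n+1)) : ℕ) =
      if (i : ℕ) < (p : ℕ) then (i : ℕ) else (i : ℕ) + 1 := by
  rcases Nat.lt_or_ge (i : ℕ) (p : ℕ) with h | h
  · rw [Fin.succAbove_of_castSucc_lt _ _ (by simpa [Fin.lt_def] using h), if_pos h]
    simp
  · rw [Fin.succAbove_of_le_castSucc _ _ (by simpa [Fin.le_def] using h),
      if_neg (by omega)]
    simp

/-- surjectivity of `skip3` onto the complement of `{a,b,c}` -/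
lemma skip3_surj {n : ℕ} (a b c : Fin (n + 3)) (hab : (a : ℕ) < b) (hbc : (b : ℕ) < c)
    (j : Fin (n + 3)) (hja : j ≠ a) (hjb : j ≠ b) (hjc : j ≠ c) :
    ∃ t : Fin n, skip3 a b c t = j := by
  have hja' : (j : ℕ) ≠ a := fun h => hja (Fin.ext h)
  have hjb' : (j : ℕ) ≠ b := fun h => hjb (Fin.ext h)
  have hjc' : (j : ℕ) ≠ c := fun h => hjc (Fin.ext h)
  have hj := j.isLt
  have hc := c.isLt
  refine ⟨⟨if (j : ℕ) < a then (j : ℕ) else if (j : ℕ) < b then (j : ℕ) - 1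
    else if (j : ℕ) < c then (j : ℕ) - 2 else (j : ℕ) - 3, by split_ifs <;> omega⟩, ?_⟩
  apply Fin.ext
  rw [coe_skip3]
  simp only
  split_ifs <;> omega

/-- generalized multilinearity of det in a row over finite sums -/
lemma det_updateRow_finsum {R : Type*} [CommRing R] {n' : Type*} [DecidableEq n'] [Fintype n']
    {ι : Type*} (M : Matrix n' n' R) (j : n') (s : Finset ι) (u : ι → n' → R) :
    (M.updateRow j (∑ i ∈ s, u i)).det = ∑ i ∈ s, (M.updateRow j (u i)).det := by
  classical
  induction s using Finset.induction_on with
  | empty =>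
      simp only [Finset.sum_empty]
      exact Matrix.det_eq_zero_of_row_eq_zero j (by simp)
  | insert _ _ h ih =>
      rw [Finset.sum_insert h, Finset.sum_insert h, Matrix.det_updateRow_add, ih]

/-- The cofactor identity: the vector of signed maximal minors of an `(n+1) × n` matrix
is orthogonal to every column. -/
lemma cofactor_identity {R : Type*} [CommRing R] {n : ℕ}
    (A : Matrix (Fin (n + 1)) (Fin n) R) (k : Fin n) :
    ∑ j : Fin (n + 1), (-1 : R) ^ (j : ℕ) * (A.submatrix j.succAbove id).det * A j k = 0 := by
  let B : Matrix (Fin (n + 1)) (Fin (n + 1)) R := Matrix.of fun i => Fin.cons (A i k) (A i)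
  have hB0 : B.det = 0 := by
    refine Matrix.det_zero_of_column_eq (i := k.succ) (j := 0) (Fin.succ_ne_zero k) ?_
    intro r
    simp [B]
  have hexp := Matrix.det_succ_column_zero B
  rw [hB0] at hexp
  have hsub : ∀ i : Fin (n + 1), B.submatrix i.succAbove Fin.succ = A.submatrix i.succAbove id := by
    intro i
    ext r c
    simp [B, Matrix.submatrix_apply]
  calc ∑ j : Fin (n + 1), (-1 : R) ^ (j : ℕ) * (A.submatrix j.succAbove id).det * A j k
      = ∑ i : Fin (n + 1), (-1) ^ (i : ℕ) * B i 0 * (B.submatrix i.succAbove Fin.succ).det := by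
        refine Finset.sum_congr rfl fun i _ => ?_
        rw [hsub i, show B i 0 = A i k from rfl]
        ring
    _ = 0 := hexp.symm

/-- Expanding a determinant whose first row is a standard basis vector. -/
lemma det_cons_single {R : Type*} [CommRing R] {n : ℕ} (k : Fin (n + 1))
    (M : Fin n → Fin (n + 1) → R) :
    (Matrix.of (Fin.cons (Pi.single k (1 : R)) M)).det
      = (-1 : R) ^ (k : ℕ) * ((Matrix.of M).submatrix id k.succAbove).det := by
  rw [Matrix.det_succ_row_zero]
  rw [Finset.sum_eq_single k]
  · have : (Matrix.of (Fin.cons (Pi.single k (1 : R)) M)).submatrix Fin.succ k.succAbove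
        = (Matrix.of M).submatrix id k.succAbove := by
      ext r c
      simp [Matrix.submatrix_apply]
    rw [this]
    simp
  · intro b _ hb
    simp [Pi.single_eq_of_ne hb]
  · simp

/-- Key step: the value of the auxiliary determinant functional at a row of `A`
belonging to the distinguished triple. -/
lemma step3 {R : Type*} [CommRing R] {m : ℕ} (A : Matrix (Fin (m + 3)) (Fin (m + 2)) R)
    (k₁ : Fin (m + 2)) (x y a b c : Fin (m + 3)) (p : Fin (m + 1)) (j : Fin (m + 3))
    (hcomp : ∀ t : Fin m, skip2 x y (p.succAbove t) = skip3 a b c t)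
    (hpj : skip2 x y p = j) :
    (Matrix.of (Fin.cons (A j) (Fin.cons (Pi.single k₁ (1 : R))
        (fun t => A (skip3 a b c t))))).det
      = (-1 : R) ^ ((p : ℕ) + 1) *
          ((-1 : R) ^ (k₁ : ℕ) * (A.submatrix (skip2 x y) k₁.succAbove).det) := by
  set e : Fin (m + 2) → R := Pi.single k₁ (1 : R) with he
  set S : Matrix (Fin (m + 2)) (Fin (m + 2)) R :=
    Matrix.of (Fin.cons (A j) (Fin.cons e (fun t => A (skip3 a b c t)))) with hS
  set T : Matrix (Fin (m + 2)) (Fin (m + 2)) R :=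
    Matrix.of (Fin.cons e (fun s => A (skip2 x y s))) with hT
  set q : Fin (m + 2) := p.succ with hq
  -- evaluation lemmas
  have hS0 : S 0 = A j := rfl
  have hS1 : ∀ (i : Fin (m + 2)), (i : ℕ) = 1 → S i = e := by
    intro i hi
    have : i = Fin.succ 0 := Fin.ext (by simpa using hi)
    rw [this]; rfl
  have hS2 : ∀ (t : Fin m) (i : Fin (m + 2)), (i : ℕ) = (t : ℕ) + 2 →
      S i = A (skip3 a b c t) := by
    intro t i hi
    have : i = Fin.succ (Fin.succ t) := Fin.ext (by simpa using hi)
    rw [this]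
    funext cc
    show (Fin.cons (A j) (Fin.cons e (fun t' => A (skip3 a b c t')))
        : Fin (m + 2) → Fin (m + 2) → R) (Fin.succ (Fin.succ t)) cc
      = A (skip3 a b c t) cc
    rw [Fin.cons_succ, Fin.cons_succ]
  have hT0 : T 0 = e := rfl
  have hTs : ∀ (s : Fin (m + 1)) (i : Fin (m + 2)), (i : ℕ) = (s : ℕ) + 1 →
      T i = A (skip2 x y s) := by
    intro s i hi
    have : i = Fin.succ s := Fin.ext (by simpa using hi)
    rw [this]
    funext cc
    show (Fin.cons e (fun s' => A (skip2 x y s')) : Fin (m + 2) → Fin (m + 2) → R)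
      (Fin.succ s) cc = A (skip2 x y s) cc
    rw [Fin.cons_succ]
  have hγ : ∀ r : Fin (m + 2), S (Fin.cycleRange q r) = T r := by
    intro r
    have hrlt := r.isLt
    have hplt := p.isLt
    have hqv : (q : ℕ) = (p : ℕ) + 1 := rfl
    rcases Nat.lt_or_ge (r : ℕ) ((p : ℕ) + 1) with hr | hr
    · -- r < q
      have hrq : r < q := by rw [Fin.lt_def, hqv]; exact hr
      have hcoe : ((Fin.cycleRange q r : Fin (m+2)) : ℕ) = (r : ℕ) + 1 :=
        Fin.coe_cycleRange_of_lt hrq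
      rcases Nat.eq_zero_or_pos (r : ℕ) with hr0 | hr0
      · -- r = 0 : γ r has value 1, S there is e, T 0 = e
        have hre : r = 0 := Fin.ext hr0
        rw [hre] at hcoe ⊢
        rw [hT0, hS1 _ (by rw [hcoe]; simp)]
      · -- 1 ≤ r ≤ p
        have htb : (r : ℕ) - 1 < m := by omega
        have hsb : (r : ℕ) - 1 < m + 1 := by omega
        rw [hS2 ⟨(r : ℕ) - 1, htb⟩ _ (by rw [hcoe]; show _ = (r:ℕ) - 1 + 2; omega),
          hTs ⟨(r : ℕ) - 1, hsb⟩ r (by show (r:ℕ) = (r:ℕ) - 1 + 1; omega)]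
        have hst : p.succAbove ⟨(r : ℕ) - 1, htb⟩ = ⟨(r : ℕ) - 1, hsb⟩ := by
          apply Fin.ext
          rw [coe_succAbove']
          show (if (r:ℕ) - 1 < (p:ℕ) then (r:ℕ) - 1 else (r:ℕ) - 1 + 1) = (r:ℕ) - 1
          rw [if_pos (by omega)]
        rw [← hcomp ⟨(r : ℕ) - 1, htb⟩, hst]
    · rcases Nat.eq_or_lt_of_le hr with hr' | hr'
      · -- r = q
        have hre : r = q := Fin.ext (by rw [hqv]; omega)
        rw [hre, Fin.cycleRange_self, hS0, hTs p q (by rw [hqv])]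
        rw [hpj]
      · -- r > q
        have hrq : q < r := by rw [Fin.lt_def, hqv]; omega
        have hfix : Fin.cycleRange q r = r := Fin.cycleRange_of_gt hrq
        have htb : (r : ℕ) - 2 < m := by omega
        have hsb : (r : ℕ) - 1 < m + 1 := by omega
        rw [hfix, hS2 ⟨(r : ℕ) - 2, htb⟩ r (by show (r:ℕ) = (r:ℕ) - 2 + 2; omega),
          hTs ⟨(r : ℕ) - 1, hsb⟩ r (by show (r:ℕ) = (r:ℕ) - 1 + 1; omega)]
        have hst : p.succAbove ⟨(r : ℕ) - 2, htb⟩ = ⟨(r : ℕ) - 1, hsb⟩ := by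
          apply Fin.ext
          rw [coe_succAbove']
          show (if (r:ℕ) - 2 < (p:ℕ) then (r:ℕ) - 2 else (r:ℕ) - 2 + 1) = (r:ℕ) - 1
          rw [if_neg (by omega)]
          omega
        rw [← hcomp ⟨(r : ℕ) - 2, htb⟩, hst]
  have hST : S = T.submatrix ((Fin.cycleRange q)⁻¹ : Equiv.Perm (Fin (m + 2))) id := by
    ext i cc
    have h1 := hγ ((Fin.cycleRange q)⁻¹ i)
    have h2 : Fin.cycleRange q ((Fin.cycleRange q)⁻¹ i) = i := Equiv.apply_symm_apply _ _
    rw [h2] at h1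
    rw [Matrix.submatrix_apply, id, ← h1]
  have hdet : S.det = ((Equiv.Perm.sign ((Fin.cycleRange q)⁻¹ : Equiv.Perm (Fin (m + 2))) : ℤ) : R)
      * T.det := by
    rw [hST, Matrix.det_permute]
  have hsign : ((Equiv.Perm.sign ((Fin.cycleRange q)⁻¹ : Equiv.Perm (Fin (m + 2))) : ℤ) : R)
      = (-1 : R) ^ ((p : ℕ) + 1) := by
    rw [Equiv.Perm.sign_inv, Fin.sign_cycleRange]
    have hqv : (q : ℕ) = (p : ℕ) + 1 := rfl
    rw [← hqv]
    push_cast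
    try ring
  have hTdet : T.det = (-1 : R) ^ (k₁ : ℕ) * (A.submatrix (skip2 x y) k₁.succAbove).det := by
    have hsame : (Matrix.of (fun s => A (skip2 x y s))).submatrix id k₁.succAbove
        = A.submatrix (skip2 x y) k₁.succAbove := rfl
    rw [hT, he, det_cons_single, hsame]
  rw [hdet, hsign, hTdet]

/-- **Mixed Plücker identity.** For an `(n+1) × n` matrix `A` (here `n = m + 2 ≥ 2`) over a
commutative ring, rows `j₁ < j₂ < j₃` and a column `k₁`, writing `D[rows; cols]` for the
determinant of `A` with the indicated rows/columns removed:
`D[j₁;]·D[j₂,j₃;k₁] − D[j₂;]·D[j₁,j₃;k₁] + D[j₃;]·D[j₁,j₂;k₁] = 0`. -/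
theorem pluecker_mixed_rows {R : Type*} [CommRing R] {m : ℕ}
    (A : Matrix (Fin (m + 3)) (Fin (m + 2)) R)
    (j₁ j₂ j₃ : Fin (m + 3)) (k₁ : Fin (m + 2))
    (h12 : j₁ < j₂) (h23 : j₂ < j₃) :
    (A.submatrix j₁.succAbove id).det * (A.submatrix (skip2 j₂ j₃) k₁.succAbove).det -
      (A.submatrix j₂.succAbove id).det * (A.submatrix (skip2 j₁ j₃) k₁.succAbove).det +
      (A.submatrix j₃.succAbove id).det * (A.submatrix (skip2 j₁ j₂) k₁.succAbove).det = 0 := by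
  have hab : (j₁ : ℕ) < j₂ := h12
  have hbc : (j₂ : ℕ) < j₃ := h23
  have hc3 := j₃.isLt
  set e : Fin (m + 2) → R := Pi.single k₁ (1 : R) with he
  set X : Fin m → Fin (m + 2) → R := fun t => A (skip3 j₁ j₂ j₃ t) with hX
  set M₀ : Matrix (Fin (m + 2)) (Fin (m + 2)) R := Matrix.of (Fin.cons 0 (Fin.cons e X)) with hM₀
  set D : Fin (m + 3) → R := fun j => (A.submatrix j.succAbove id).det with hD
  set cf : Fin (m + 3) → R := fun j => (-1 : R) ^ (j : ℕ) * D j with hcf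
  have hupd : ∀ w : Fin (m + 2) → R,
      (Matrix.of (Fin.cons w (Fin.cons e X)) : Matrix (Fin (m+2)) (Fin (m+2)) R)
        = M₀.updateRow 0 w := by
    intro w
    ext i cc
    refine Fin.cases ?_ (fun s => ?_) i
    · rw [Matrix.updateRow_self]; rfl
    · rw [Matrix.updateRow_ne (Fin.succ_ne_zero s)]; rfl
  -- the linear combination of rows with cofactor coefficients vanishes
  have hzero : (∑ j : Fin (m + 3), cf j • A j) = 0 := by
    funext k
    rw [Finset.sum_apply]
    simpa [hcf, hD, mul_assoc] using cofactor_identity A k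
  have hsum : ∑ j : Fin (m + 3), cf j * (M₀.updateRow 0 (A j)).det = 0 := by
    have h1 : ∀ j, cf j * (M₀.updateRow 0 (A j)).det = (M₀.updateRow 0 (cf j • A j)).det := by
      intro j; rw [Matrix.det_updateRow_smul]
    calc ∑ j : Fin (m + 3), cf j * (M₀.updateRow 0 (A j)).det
        = ∑ j : Fin (m + 3), (M₀.updateRow 0 (cf j • A j)).det :=
          Finset.sum_congr rfl fun j _ => h1 j
      _ = (M₀.updateRow 0 (∑ j : Fin (m + 3), cf j • A j)).det :=
          (det_updateRow_finsum M₀ 0 Finset.univ _).symm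
      _ = 0 := by
          rw [hzero]
          exact Matrix.det_eq_zero_of_row_eq_zero 0 (by simp)
  -- off-triple terms vanish
  have hoff : ∀ j : Fin (m + 3), j ≠ j₁ → j ≠ j₂ → j ≠ j₃ →
      (M₀.updateRow 0 (A j)).det = 0 := by
    intro j hj1 hj2 hj3
    obtain ⟨t, ht⟩ := skip3_surj j₁ j₂ j₃ hab hbc j hj1 hj2 hj3
    rw [← hupd (A j)]
    refine Matrix.det_zero_of_row_eq (i := 0) (j := Fin.succ (Fin.succ t))
      (Fin.succ_ne_zero _).symm ?_
    funext cc
    show (Fin.cons (A j) (Fin.cons e X) : Fin (m + 2) → Fin (m + 2) → R) 0 cc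
      = (Fin.cons (A j) (Fin.cons e X) : Fin (m + 2) → Fin (m + 2) → R) (Fin.succ (Fin.succ t)) cc
    rw [Fin.cons_zero, Fin.cons_succ, Fin.cons_succ]
    show A j cc = A (skip3 j₁ j₂ j₃ t) cc
    rw [ht]
  -- restrict the sum to the triple
  have hne12 : j₁ ≠ j₂ := ne_of_lt h12
  have hne13 : j₁ ≠ j₃ := ne_of_lt (lt_trans h12 h23)
  have hne23 : j₂ ≠ j₃ := ne_of_lt h23
  have htriple : cf j₁ * (M₀.updateRow 0 (A j₁)).det + cf j₂ * (M₀.updateRow 0 (A j₂)).det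
      + cf j₃ * (M₀.updateRow 0 (A j₃)).det = 0 := by
    have hsub : (∑ j ∈ ({j₁, j₂, j₃} : Finset (Fin (m+3))),
        cf j * (M₀.updateRow 0 (A j)).det)
        = ∑ j : Fin (m + 3), cf j * (M₀.updateRow 0 (A j)).det := by
      refine Finset.sum_subset (Finset.subset_univ _) ?_
      intro x _ hx
      simp only [Finset.mem_insert, Finset.mem_singleton, not_or] at hx
      rw [hoff x hx.1 hx.2.1 hx.2.2, mul_zero]
    rw [hsum] at hsub
    rw [Finset.sum_insert (by simp [hne12, hne13]), Finset.sum_insert (by simp [hne23]),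
      Finset.sum_singleton] at hsub
    linear_combination hsub
  -- compute the three determinants via `step3`
  have hp1b : (j₁ : ℕ) < m + 1 := by omega
  have hp2b : (j₂ : ℕ) - 1 < m + 1 := by omega
  have hp3b : (j₃ : ℕ) - 2 < m + 1 := by omega
  have hcomp₁ : ∀ t : Fin m, skip2 j₂ j₃ ((⟨(j₁ : ℕ), hp1b⟩ : Fin (m+1)).succAbove t)
      = skip3 j₁ j₂ j₃ t := by
    intro t
    have htl := t.isLt
    apply Fin.ext
    have hv : ((⟨(j₁ : ℕ), hp1b⟩ : Fin (m+1)) : ℕ) = (j₁ : ℕ) := rfl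
    rw [coe_skip2, coe_skip3, coe_succAbove', hv]
    split_ifs <;> omega
  have hcomp₂ : ∀ t : Fin m, skip2 j₁ j₃ ((⟨(j₂ : ℕ) - 1, hp2b⟩ : Fin (m+1)).succAbove t)
      = skip3 j₁ j₂ j₃ t := by
    intro t
    have htl := t.isLt
    apply Fin.ext
    have hv : ((⟨(j₂ : ℕ) - 1, hp2b⟩ : Fin (m+1)) : ℕ) = (j₂ : ℕ) - 1 := rfl
    rw [coe_skip2, coe_skip3, coe_succAbove', hv]
    split_ifs <;> omega
  have hcomp₃ : ∀ t : Fin m, skip2 j₁ j₂ ((⟨(j₃ : ℕ) - 2, hp3b⟩ : Fin (m+1)).succAbove t)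
      = skip3 j₁ j₂ j₃ t := by
    intro t
    have htl := t.isLt
    apply Fin.ext
    have hv : ((⟨(j₃ : ℕ) - 2, hp3b⟩ : Fin (m+1)) : ℕ) = (j₃ : ℕ) - 2 := rfl
    rw [coe_skip2, coe_skip3, coe_succAbove', hv]
    split_ifs <;> omega
  have hpj₁ : skip2 j₂ j₃ (⟨(j₁ : ℕ), hp1b⟩ : Fin (m+1)) = j₁ := by
    apply Fin.ext
    have hv : ((⟨(j₁ : ℕ), hp1b⟩ : Fin (m+1)) : ℕ) = (j₁ : ℕ) := rfl
    rw [coe_skip2, hv]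
    split_ifs <;> omega
  have hpj₂ : skip2 j₁ j₃ (⟨(j₂ : ℕ) - 1, hp2b⟩ : Fin (m+1)) = j₂ := by
    apply Fin.ext
    have hv : ((⟨(j₂ : ℕ) - 1, hp2b⟩ : Fin (m+1)) : ℕ) = (j₂ : ℕ) - 1 := rfl
    rw [coe_skip2, hv]
    split_ifs <;> omega
  have hpj₃ : skip2 j₁ j₂ (⟨(j₃ : ℕ) - 2, hp3b⟩ : Fin (m+1)) = j₃ := by
    apply Fin.ext
    have hv : ((⟨(j₃ : ℕ) - 2, hp3b⟩ : Fin (m+1)) : ℕ) = (j₃ : ℕ) - 2 := rfl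
    rw [coe_skip2, hv]
    split_ifs <;> omega
  have hW1 : (M₀.updateRow 0 (A j₁)).det
      = (-1 : R) ^ ((j₁ : ℕ) + 1) *
          ((-1 : R) ^ (k₁ : ℕ) * (A.submatrix (skip2 j₂ j₃) k₁.succAbove).det) := by
    rw [← hupd (A j₁), he, hX]
    exact step3 A k₁ j₂ j₃ j₁ j₂ j₃ ⟨(j₁ : ℕ), hp1b⟩ j₁ hcomp₁ hpj₁
  have hW2 : (M₀.updateRow 0 (A j₂)).det
      = (-1 : R) ^ (((j₂ : ℕ) - 1) + 1) *
          ((-1 : R) ^ (k₁ : ℕ) * (A.submatrix (skip2 j₁ j₃) k₁.succAbove).det) := by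
    rw [← hupd (A j₂), he, hX]
    exact step3 A k₁ j₁ j₃ j₁ j₂ j₃ ⟨(j₂ : ℕ) - 1, hp2b⟩ j₂ hcomp₂ hpj₂
  have hW3 : (M₀.updateRow 0 (A j₃)).det
      = (-1 : R) ^ (((j₃ : ℕ) - 2) + 1) *
          ((-1 : R) ^ (k₁ : ℕ) * (A.submatrix (skip2 j₁ j₂) k₁.succAbove).det) := by
    rw [← hupd (A j₃), he, hX]
    exact step3 A k₁ j₁ j₂ j₁ j₂ j₃ ⟨(j₃ : ℕ) - 2, hp3b⟩ j₃ hcomp₃ hpj₃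
  -- clean up signs
  have hsq : ∀ t : ℕ, (-1 : R) ^ t * (-1 : R) ^ t = 1 := by
    intro t; rw [← mul_pow]; norm_num
  have hb1 : ((j₂ : ℕ) - 1) + 1 = (j₂ : ℕ) := by omega
  have hc2 : ((j₃ : ℕ) - 2) + 1 = (j₃ : ℕ) - 1 := by omega
  have hc1 : ((j₃ : ℕ) - 1) + 1 = (j₃ : ℕ) := by omega
  set P₂₃ := (A.submatrix (skip2 j₂ j₃) k₁.succAbove).det
  set P₁₃ := (A.submatrix (skip2 j₁ j₃) k₁.succAbove).det
  set P₁₂ := (A.submatrix (skip2 j₁ j₂) k₁.succAbove).det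
  rw [hW1, hW2, hW3, hb1, hc2] at htriple
  rw [hcf] at htriple
  simp only at htriple
  have hpow : (-1 : R) ^ (j₃ : ℕ) = (-1 : R) ^ ((j₃ : ℕ) - 1) * (-1) := by
    rw [← pow_succ, hc1]
  rw [pow_succ, hpow] at htriple
  have key : (-1 : R) ^ (k₁ : ℕ) *
      (D j₁ * P₂₃ - D j₂ * P₁₃ + D j₃ * P₁₂) = 0 := by
    have e1 := hsq (j₁ : ℕ)
    have e2 := hsq (j₂ : ℕ)
    have e3 := hsq ((j₃ : ℕ) - 1)
    linear_combination (-1 : R) * htriple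
      + (-(-1 : R) ^ (k₁ : ℕ) * D j₁ * P₂₃) * e1
      + ((-1 : R) ^ (k₁ : ℕ) * D j₂ * P₁₃) * e2
      + (-(-1 : R) ^ (k₁ : ℕ) * D j₃ * P₁₂) * e3
  have key2 : D j₁ * P₂₃ - D j₂ * P₁₃ + D j₃ * P₁₂ = 0 := by
    have h := congrArg (fun z => (-1 : R) ^ (k₁ : ℕ) * z) key
    simp only [mul_zero] at h
    rw [← mul_assoc, hsq (k₁ : ℕ), one_mul] at h
    exact h
  exact key2
end

section
/- Generalized Cauchy determinant (Moens–Van der Jeugt type): Let m ≥ n ≥ 0 and let z_{b₁},…,z_{b_m}, z_{f₁},…,z_{f_n} be elements of a field such that z_{b_i} ≠ z_{f_j} for all i,j. Consider the m×m matrix whose first n columns have entries 1/(z_{b_k} − z_{f_l}) for 1 ≤ k ≤ m, 1 ≤ l ≤ n, and whose remaining m−n columns have entries z_{b_k}^{l−1} for 1 ≤ l ≤ m−n. Then its determinant equals (−1)^{(m−n)(m+n−1)/2} · [∏_{1≤i<j≤m}(z_{b_i}−z_{b_j}) · ∏_{1≤i<j≤n}(z_{f_j}−z_{f_i})] / ∏_{i=1}^m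 ∏_{j=1}^n (z_{b_i}−z_{f_j}). -/
open Finset Polynomial Matrix

lemma pairs_to_Ioi {M : Type*} [CommMonoid M] {N : ℕ} (f : Fin N → Fin N → M) :
    (∏ q ∈ Finset.univ.filter (fun q : Fin N × Fin N => q.1 < q.2), f q.1 q.2)
      = ∏ i, ∏ j ∈ Finset.Ioi i, f i j := by
  rw [Finset.prod_filter, ← Finset.univ_product_univ, Finset.prod_product]
  refine Finset.prod_congr rfl fun i _ => ?_
  rw [← Finset.prod_filter]
  congr 1
  ext j
  simp [Finset.mem_Ioi]

lemma Ioi_const_pow {K : Type*} [CommMonoid K] {N : ℕ} (c : K) :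
    (∏ i : Fin N, ∏ _j ∈ Finset.Ioi i, c) = c ^ (N * (N - 1) / 2) := by
  simp_rw [Finset.prod_const]
  rw [Finset.prod_pow_eq_pow_sum]
  congr 1
  simp_rw [Fin.card_Ioi]
  rw [Fin.sum_univ_eq_sum_range, ← Finset.sum_range_reflect]
  simp_rw [Nat.sub_sub]
  rw [← Finset.sum_range_id N]
  refine Finset.sum_congr rfl fun i hi => ?_
  rw [Finset.mem_range] at hi
  omega

lemma exp_split (n p : ℕ) :
    (n + p) * (n + p - 1) / 2 = n * (n - 1) / 2 + p * (2 * n + p - 1) / 2 := by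
  have h1 : (n + p) * (n + p - 1) = n * (n - 1) + p * (2 * n + p - 1) := by
    rcases p with _ | q
    · simp
    · rcases n with _ | r
      · simp [Nat.add_sub_cancel]
      · have : r + 1 + (q + 1) - 1 = r + q + 1 := by omega
        rw [this]
        have : r + 1 - 1 = r := by omega
        rw [this]
        have : 2 * (r + 1) + (q + 1) - 1 = 2 * r + q + 2 := by omega
        rw [this]
        ring
  have h2 : n * (n - 1) % 2 = 0 := by
    rcases n with _ | r
    · simp
    · have e1 : (r + 1) * (r + 1 - 1) = r * (r + 1) := by
        simp [Nat.mul_comm]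
      rw [e1]
      exact Nat.even_iff.mp (Nat.even_mul_succ_self r)
  have h3 : p * (2 * n + p - 1) % 2 = 0 := by
    rcases Nat.even_or_odd p with ⟨k, hk⟩ | ⟨k, hk⟩
    · subst hk
      have : k + k = 2 * k := by omega
      rw [this, Nat.mul_assoc]  -- 2 * (k * _)
      omega
    · subst hk
      have h4 : 2 * n + (2 * k + 1) - 1 = 2 * (n + k) := by omega
      rw [h4]
      have : (2 * k + 1) * (2 * (n + k)) = 2 * ((2 * k + 1) * (n + k)) := by ring
      rw [this]
      omega
  omega

lemma coeffMatrix_det {K : Type*} [Field K] {n : ℕ} (zf : Fin n → K)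
    (hinj : Function.Injective zf) :
    (Matrix.of fun j l : Fin n =>
        (∏ t ∈ Finset.univ.erase l, (Polynomial.X - Polynomial.C (zf t))).coeff (j : ℕ)).det
      = (-1 : K) ^ (n * (n - 1) / 2) * ∏ i, ∏ j ∈ Finset.Ioi i, (zf j - zf i) := by
  set F := ∏ i, ∏ j ∈ Finset.Ioi i, (zf j - zf i) with hFdef
  have hFne : F ≠ 0 := by
    refine Finset.prod_ne_zero_iff.mpr fun i _ => Finset.prod_ne_zero_iff.mpr fun j hj => ?_
    exact sub_ne_zero.mpr (hinj.ne (Finset.mem_Ioi.mp hj).ne')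
  have hdeg : ∀ l : Fin n,
      (∏ t ∈ Finset.univ.erase l, (X - C (zf t))).natDegree = n - 1 := by
    intro l
    rw [Polynomial.natDegree_prod_of_monic _ _ fun t _ => monic_X_sub_C _]
    simp [Finset.card_erase_of_mem]
  have hVA : Matrix.vandermonde zf * (Matrix.of fun j l : Fin n =>
      (∏ t ∈ Finset.univ.erase l, (X - C (zf t))).coeff (j : ℕ)) =
      Matrix.diagonal (fun l => ∏ t ∈ Finset.univ.erase l, (zf l - zf t)) := by
    ext k l
    rw [Matrix.mul_apply]
    have hn : 0 < n := k.pos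
    have hlt : (∏ t ∈ Finset.univ.erase l, (X - C (zf t))).natDegree < n := by
      rw [hdeg]; omega
    have heval : (∏ t ∈ Finset.univ.erase l, (X - C (zf t))).eval (zf k)
        = ∑ j : Fin n, Matrix.vandermonde zf k j *
          (∏ t ∈ Finset.univ.erase l, (X - C (zf t))).coeff (j : ℕ) := by
      rw [Polynomial.eval_eq_sum_range' hlt (zf k)]
      refine Eq.trans (Fin.sum_univ_eq_sum_range
          (fun i : ℕ => (∏ t ∈ Finset.univ.erase l, (X - C (zf t))).coeff i * zf k ^ i) n).symm ?_
      exact Finset.sum_congr rfl fun j _ => by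
        simp only [Matrix.vandermonde, Matrix.of_apply]
        ring
    simp only [Matrix.of_apply]
    rw [← heval, Polynomial.eval_prod]
    simp only [Polynomial.eval_sub, Polynomial.eval_X, Polynomial.eval_C]
    rcases eq_or_ne k l with rfl | hkl
    · rw [Matrix.diagonal_apply_eq]
    · rw [Matrix.diagonal_apply_ne _ hkl]
      exact Finset.prod_eq_zero (Finset.mem_erase.mpr ⟨hkl, Finset.mem_univ _⟩) (sub_self _)
  have hdet := congrArg Matrix.det hVA
  rw [Matrix.det_mul, Matrix.det_vandermonde, Matrix.det_diagonal] at hdet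
  have hE : (∏ l, ∏ t ∈ Finset.univ.erase l, (zf l - zf t))
      = (-1 : K) ^ (n * (n - 1) / 2) * (F * F) := by
    have h0 := Finset.prod_prod_Ioi_mul_eq_prod_prod_off_diag (fun a b : Fin n => zf b - zf a)
    simp only [Finset.compl_singleton] at h0
    have h0' : (∏ l : Fin n, ∏ t ∈ Finset.univ.erase l, (zf l - zf t))
        = ∏ i, ∏ j ∈ Finset.Ioi i, ((zf i - zf j) * (zf j - zf i)) := by
      convert h0.symm using 2 <;> congr!
    rw [h0']
    have : ∀ i : Fin n, ∀ j ∈ Finset.Ioi i,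
        (zf i - zf j) * (zf j - zf i) = (-1) * ((zf j - zf i) * (zf j - zf i)) := by
      intros; ring
    rw [Finset.prod_congr rfl fun i _ => Finset.prod_congr rfl (this i)]
    simp_rw [Finset.prod_mul_distrib]
    rw [Ioi_const_pow]
  rw [hE] at hdet
  rw [show (-1 : K) ^ (n * (n - 1) / 2) * (F * F) = F * ((-1) ^ (n * (n - 1) / 2) * F) by ring]
    at hdet
  exact mul_left_cancel₀ hFne hdet

/-- The column polynomials of the generalized Cauchy matrix after clearing denominators. -/
noncomputable def genP {K : Type*} [Field K] {n p : ℕ} (zf : Fin n → K) (l : Fin (n + p)) : Polynomial K :=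
  if h : (l : ℕ) < n then
    ∏ t ∈ Finset.univ.erase (⟨(l : ℕ), h⟩ : Fin n), (Polynomial.X - Polynomial.C (zf t))
  else Polynomial.X ^ ((l : ℕ) - n) * ∏ t, (Polynomial.X - Polynomial.C (zf t))

lemma Qdeg {K : Type*} [Field K] {n : ℕ} (zf : Fin n → K) :
    (∏ t, (Polynomial.X - Polynomial.C (zf t))).natDegree = n := by
  rw [Polynomial.natDegree_prod_of_monic _ _ fun t _ => monic_X_sub_C _]
  simp

lemma Edeg {K : Type*} [Field K] {n : ℕ} (zf : Fin n → K) (l : Fin n) :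
    (∏ t ∈ Finset.univ.erase l, (Polynomial.X - Polynomial.C (zf t))).natDegree = n - 1 := by
  rw [Polynomial.natDegree_prod_of_monic _ _ fun t _ => monic_X_sub_C _]
  simp [Finset.card_erase_of_mem]

lemma genP_deg {K : Type*} [Field K] {n p : ℕ} (zf : Fin n → K) (l : Fin (n + p)) :
    (genP zf l).natDegree < n + p := by
  unfold genP
  split_ifs with h
  · rw [Edeg]
    omega
  · rw [(monic_X_pow _).natDegree_mul (monic_prod_of_monic _ _ fun t _ => monic_X_sub_C _),
      Polynomial.natDegree_X_pow, Qdeg]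
    have := l.isLt
    omega

lemma det_genP_coeff {K : Type*} [Field K] {n p : ℕ} (zf : Fin n → K)
    (hinj : Function.Injective zf) :
    (Matrix.of fun j l : Fin (n + p) => (genP zf l).coeff (j : ℕ)).det
      = (-1 : K) ^ (n * (n - 1) / 2) * ∏ i, ∏ j ∈ Finset.Ioi i, (zf j - zf i) := by
  rw [← Matrix.det_submatrix_equiv_self (finSumFinEquiv (m := n) (n := p))]
  set B := (Matrix.of fun j l : Fin (n + p) =>
      (genP zf l).coeff (j : ℕ)).submatrix finSumFinEquiv finSumFinEquiv with hB
  have h21 : B.toBlocks₂₁ = 0 := by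
    ext j' l
    simp only [Matrix.toBlocks₂₁, hB, Matrix.submatrix_apply, Matrix.of_apply,
      finSumFinEquiv_apply_left, finSumFinEquiv_apply_right, Matrix.zero_apply]
    have hlt : ((Fin.castAdd p l : Fin (n + p)) : ℕ) < n := by
      simp [l.isLt]
    rw [genP, dif_pos hlt]
    refine Polynomial.coeff_eq_zero_of_natDegree_lt ?_
    rw [Edeg]
    have : ((Fin.natAdd n j' : Fin (n + p)) : ℕ) = n + (j' : ℕ) := rfl
    rw [this]
    have := l.isLt
    omega
  have h11 : B.toBlocks₁₁ = Matrix.of fun j l : Fin n =>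
      (∏ t ∈ Finset.univ.erase l, (Polynomial.X - Polynomial.C (zf t))).coeff (j : ℕ) := by
    ext j l
    simp only [Matrix.toBlocks₁₁, hB, Matrix.submatrix_apply, Matrix.of_apply,
      finSumFinEquiv_apply_left]
    have hlt : ((Fin.castAdd p l : Fin (n + p)) : ℕ) < n := by simp [l.isLt]
    rw [genP, dif_pos hlt]
    rfl
  have h22 : B.toBlocks₂₂.det = 1 := by
    have hentry : ∀ j' l' : Fin p, B.toBlocks₂₂ j' l' =
        (Polynomial.X ^ (l' : ℕ) * ∏ t, (Polynomial.X - Polynomial.C (zf t))).coeff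
          (n + (j' : ℕ)) := by
      intro j' l'
      simp only [Matrix.toBlocks₂₂, hB, Matrix.submatrix_apply, Matrix.of_apply,
        finSumFinEquiv_apply_right]
      have hnlt : ¬ ((Fin.natAdd n l' : Fin (n + p)) : ℕ) < n := by simp
      rw [genP, dif_neg hnlt]
      congr 2 <;> simp
    have htri : B.toBlocks₂₂.BlockTriangular id := by
      intro j' l' hlt
      simp only [id_eq] at hlt
      have hl : (l' : ℕ) < (j' : ℕ) := hlt
      rw [hentry, Polynomial.coeff_X_pow_mul',
        if_pos (by omega : (l' : ℕ) ≤ n + (j' : ℕ))]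
      exact Polynomial.coeff_eq_zero_of_natDegree_lt (by rw [Qdeg]; omega)
    rw [Matrix.det_of_upperTriangular htri]
    refine Finset.prod_eq_one fun j' _ => ?_
    rw [hentry, Polynomial.coeff_X_pow_mul _ (j' : ℕ) n]
    have := (monic_prod_of_monic Finset.univ
      (fun t : Fin n => Polynomial.X - Polynomial.C (zf t)) fun t _ => monic_X_sub_C _)
    have h := this.coeff_natDegree
    rwa [Qdeg] at h
  rw [← Matrix.fromBlocks_toBlocks B, h21, Matrix.det_fromBlocks_zero₂₁, h11, h22, mul_one,
    coeffMatrix_det zf hinj]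


/-- **Generalized Cauchy determinant (Moens–Van der Jeugt type).** Let `m = n + p ≥ n` and
let `z_{b₁},…,z_{b_m}, z_{f₁},…,z_{f_n}` be field elements with `z_{b_i} ≠ z_{f_j}` for all
`i, j`. The `m × m` matrix whose first `n` columns are the Cauchy block
`1/(z_{b_k} − z_{f_l})` and whose remaining `m − n` columns are the Vandermonde block
`z_{b_k}^{l−1}` has determinant
`(−1)^{(m−n)(m+n−1)/2} · ∏_{i<j}(z_{b_i}−z_{b_j}) · ∏_{i<j}(z_{f_j}−z_{f_i}) /
∏_{i,j}(z_{b_i}−z_{f_j})`. -/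
theorem generalized_cauchy_det {K : Type*} [Field K] {n p : ℕ}
    (zb : Fin (n + p) → K) (zf : Fin n → K)
    (hbf : ∀ i j, zb i ≠ zf j) :
    (Matrix.of fun k l : Fin (n + p) =>
        if h : (l : ℕ) < n then (zb k - zf ⟨(l : ℕ), h⟩)⁻¹ else zb k ^ ((l : ℕ) - n)).det =
      (-1 : K) ^ (p * (2 * n + p - 1) / 2) *
        ((∏ q ∈ Finset.univ.filter (fun q : Fin (n + p) × Fin (n + p) => q.1 < q.2),
            (zb q.1 - zb q.2)) *
          (∏ q ∈ Finset.univ.filter (fun q : Fin n × Fin n => q.1 < q.2),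
            (zf q.2 - zf q.1))) /
        (∏ i, ∏ j, (zb i - zf j)) := by
  by_cases hinj : Function.Injective zf
  · have hkey : Matrix.diagonal (fun k => ∏ j, (zb k - zf j)) *
        (Matrix.of fun k l : Fin (n + p) =>
          if h : (l : ℕ) < n then (zb k - zf ⟨(l : ℕ), h⟩)⁻¹ else zb k ^ ((l : ℕ) - n)) =
        Matrix.vandermonde zb *
          Matrix.of (fun j l : Fin (n + p) => (genP zf l).coeff (j : ℕ)) := by
      ext k l
      have heval : (genP zf l).eval (zb k)
          = ∑ j : Fin (n + p), Matrix.vandermonde zb k j * (genP zf l).coeff (j : ℕ) := by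
        rw [Polynomial.eval_eq_sum_range' (genP_deg zf l) (zb k)]
        refine Eq.trans (Fin.sum_univ_eq_sum_range
          (fun i : ℕ => (genP zf l).coeff i * zb k ^ i) (n + p)).symm ?_
        exact Finset.sum_congr rfl fun j _ => by
          simp only [Matrix.vandermonde, Matrix.of_apply]; ring
      rw [Matrix.diagonal_mul, Matrix.mul_apply]
      simp only [Matrix.of_apply]
      rw [← heval]
      unfold genP
      by_cases h : (l : ℕ) < n
      · rw [dif_pos h, dif_pos h, Polynomial.eval_prod]
        simp only [Polynomial.eval_sub, Polynomial.eval_X, Polynomial.eval_C]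
        have ha : zb k - zf ⟨(l : ℕ), h⟩ ≠ 0 := sub_ne_zero.mpr (hbf k _)
        rw [← Finset.mul_prod_erase Finset.univ (fun t => zb k - zf t)
          (Finset.mem_univ (⟨(l : ℕ), h⟩ : Fin n))]
        rw [mul_comm (zb k - zf ⟨(l : ℕ), h⟩) _, mul_assoc, mul_inv_cancel₀ ha, mul_one]
      · rw [dif_neg h, dif_neg h]
        rw [Polynomial.eval_mul, Polynomial.eval_pow, Polynomial.eval_X, Polynomial.eval_prod]
        simp only [Polynomial.eval_sub, Polynomial.eval_X, Polynomial.eval_C]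
        ring
    have hdets := congrArg Matrix.det hkey
    rw [Matrix.det_mul, Matrix.det_mul, Matrix.det_diagonal, Matrix.det_vandermonde,
      det_genP_coeff zf hinj] at hdets
    have hDne : (∏ i, ∏ j, (zb i - zf j)) ≠ 0 :=
      Finset.prod_ne_zero_iff.mpr fun i _ => Finset.prod_ne_zero_iff.mpr fun j _ =>
        sub_ne_zero.mpr (hbf i j)
    rw [pairs_to_Ioi (fun a b : Fin (n + p) => zb a - zb b),
      pairs_to_Ioi (fun a b : Fin n => zf b - zf a)]
    have hflip : (∏ i, ∏ j ∈ Finset.Ioi i, (zb i - zb j))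
        = (-1 : K) ^ ((n + p) * (n + p - 1) / 2) *
          ∏ i, ∏ j ∈ Finset.Ioi i, (zb j - zb i) := by
      have : ∀ i : Fin (n + p), ∀ j ∈ Finset.Ioi i,
          zb i - zb j = (-1) * (zb j - zb i) := by intros; ring
      rw [Finset.prod_congr rfl fun i _ => Finset.prod_congr rfl (this i)]
      simp_rw [Finset.prod_mul_distrib]
      rw [Ioi_const_pow]
    rw [hflip, eq_div_iff hDne, exp_split n p, pow_add]
    have h1 : (-1 : K) ^ (p * (2 * n + p - 1) / 2) *
        (-1 : K) ^ (p * (2 * n + p - 1) / 2) = 1 := by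
      rw [← mul_pow]; norm_num
    linear_combination hdets - ((-1 : K) ^ (n * (n - 1) / 2) *
      (∏ i, ∏ j ∈ Finset.Ioi i, (zb j - zb i)) *
      (∏ i, ∏ j ∈ Finset.Ioi i, (zf j - zf i))) * h1
  · rw [Function.not_injective_iff] at hinj
    obtain ⟨a, b, hab, hne⟩ := hinj
    have hcol : (Matrix.of fun k l : Fin (n + p) =>
        if h : (l : ℕ) < n then (zb k - zf ⟨(l : ℕ), h⟩)⁻¹ else zb k ^ ((l : ℕ) - n)).det = 0 := by
      refine Matrix.det_zero_of_column_eq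
        (i := Fin.castLE (Nat.le_add_right n p) a) (j := Fin.castLE (Nat.le_add_right n p) b)
        (fun h => hne (Fin.val_inj.mp (by simpa using congrArg Fin.val h))) fun k => ?_
      simp only [Matrix.of_apply]
      have hca : ((Fin.castLE (Nat.le_add_right n p) a : Fin (n + p)) : ℕ) < n := a.isLt
      have hcb : ((Fin.castLE (Nat.le_add_right n p) b : Fin (n + p)) : ℕ) < n := b.isLt
      rw [dif_pos hca, dif_pos hcb]
      show (zb k - zf a)⁻¹ = (zb k - zf b)⁻¹
      rw [hab]
    rw [hcol]
    have hzero : (∏ q ∈ Finset.univ.filter (fun q : Fin n × Fin n => q.1 < q.2),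
        (zf q.2 - zf q.1)) = 0 := by
      rcases hne.lt_or_gt with h | h
      · exact Finset.prod_eq_zero
          (Finset.mem_filter.mpr ⟨Finset.mem_univ ((a, b) : Fin n × Fin n), h⟩)
          (by simp [hab])
      · exact Finset.prod_eq_zero
          (Finset.mem_filter.mpr ⟨Finset.mem_univ ((b, a) : Fin n × Fin n), h⟩)
          (by simp [hab])
    rw [hzero]
    simp
end

section
/- With D(b's; f's) as in the generalized Cauchy product expression, for additional indices α appended to the first list and β appended to the second list (all needed differences nonzero): D(b₁,…,b_m,α; f₁,…,f_n) · D(b₁,…,b_m; f₁,…,f_n,β) = (z_α − z_β) · D(b₁,…,b_m; f₁,…,f_n) · D(b₁,…,b_m,α; f₁,…,f_n,β). -/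
lemma pairs_eq {K : Type*} [CommMonoid K] {N : ℕ} (g : Fin N → Fin N → K) :
    ∏ q ∈ Finset.univ.filter (fun q : Fin N × Fin N => q.1 < q.2), g q.1 q.2 =
      ∏ i, ∏ j ∈ Finset.Ioi i, g i j := by
  rw [Finset.prod_sigma']
  refine Finset.prod_nbij' (fun q => ⟨q.1, q.2⟩) (fun q => (q.1, q.2)) ?_ ?_ ?_ ?_ ?_ <;>
    simp [Finset.mem_sigma]

lemma Ioi_castSucc_eq {N : ℕ} (i : Fin N) :
    Finset.Ioi (Fin.castSucc i) =
      insert (Fin.last N) ((Finset.Ioi i).map Fin.castSuccEmb) := by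
  ext j
  simp only [Finset.mem_Ioi, Finset.mem_insert, Finset.mem_map, Fin.castSuccEmb]
  constructor
  · intro h
    rcases Fin.eq_castSucc_or_eq_last j with ⟨k, rfl⟩ | hj
    · exact Or.inr ⟨k, by simpa [Fin.castSucc_lt_castSucc_iff] using h, rfl⟩
    · exact Or.inl hj
  · rintro (rfl | ⟨k, hk, rfl⟩)
    · exact Fin.castSucc_lt_last i
    · exact Fin.castSucc_lt_castSucc_iff.mpr hk

lemma pairs_snoc {K : Type*} [CommMonoid K] {N : ℕ} (g : Fin (N+1) → Fin (N+1) → K) :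
    ∏ i : Fin (N+1), ∏ j ∈ Finset.Ioi i, g i j =
      (∏ i : Fin N, ∏ j ∈ Finset.Ioi i, g i.castSucc j.castSucc) *
        ∏ i : Fin N, g i.castSucc (Fin.last N) := by
  rw [Fin.prod_univ_castSucc]
  have h1 : ∀ i : Fin N, ∏ j ∈ Finset.Ioi (Fin.castSucc i), g i.castSucc j =
      g i.castSucc (Fin.last N) * ∏ j ∈ Finset.Ioi i, g i.castSucc j.castSucc := by
    intro i
    rw [Ioi_castSucc_eq, Finset.prod_insert (by simp only [Finset.mem_map, Finset.mem_Ioi, not_exists, not_and]; intro x _ h; exact (Fin.castSucc_lt_last x).ne h), Finset.prod_map]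
    rfl
  have h2 : Finset.Ioi (Fin.last N) = (∅ : Finset (Fin (N+1))) := by
    ext j; simp [Fin.le_last]
  rw [h2]
  simp only [h1, Finset.prod_mul_distrib, Finset.prod_empty, mul_one]
  rw [mul_comm]



/-- The generalized Cauchy expression
`D(b₁,…,b_m; f₁,…,f_n) = ∏_{i<j}(z_{b_i}−z_{b_j}) ∏_{i<j}(z_{f_j}−z_{f_i}) /
∏_{i,j}(z_{b_i}−z_{f_j})`. -/
def Dfun {K : Type*} [Field K] {m n : ℕ} (zb : Fin m → K) (zf : Fin n → K) : K :=
  ((∏ q ∈ Finset.univ.filter (fun q : Fin m × Fin m => q.1 < q.2), (zb q.1 - zb q.2)) *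
    (∏ q ∈ Finset.univ.filter (fun q : Fin n × Fin n => q.1 < q.2), (zf q.2 - zf q.1))) /
    (∏ i, ∏ j, (zb i - zf j))

lemma Dfun_snoc_fst {K : Type*} [Field K] {m n : ℕ} (zb : Fin m → K) (zf : Fin n → K)
    (a : K) :
    Dfun (Fin.snoc zb a) zf =
      Dfun zb zf * ((∏ i, (zb i - a)) / (∏ j, (a - zf j))) := by
  unfold Dfun
  have hb : (∏ q ∈ Finset.univ.filter (fun q : Fin (m+1) × Fin (m+1) => q.1 < q.2),
      ((Fin.snoc zb a : Fin (m+1) → K) q.1 - (Fin.snoc zb a : Fin (m+1) → K) q.2)) =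
      (∏ q ∈ Finset.univ.filter (fun q : Fin m × Fin m => q.1 < q.2), (zb q.1 - zb q.2)) *
        ∏ i, (zb i - a) := by
    rw [pairs_eq (fun i j => (Fin.snoc zb a : Fin (m+1) → K) i - (Fin.snoc zb a : Fin (m+1) → K) j), pairs_snoc]
    simp only [Fin.snoc_castSucc, Fin.snoc_last]
    rw [← pairs_eq (fun i j => zb i - zb j)]
  have hd : (∏ i : Fin (m+1), ∏ j, ((Fin.snoc zb a : Fin (m+1) → K) i - zf j)) =
      (∏ i, ∏ j, (zb i - zf j)) * ∏ j, (a - zf j) := by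
    rw [Fin.prod_univ_castSucc]
    simp only [Fin.snoc_castSucc, Fin.snoc_last]
  rw [hb, hd]
  simp only [div_eq_mul_inv, mul_inv]
  ring

lemma Dfun_snoc_snd {K : Type*} [Field K] {m n : ℕ} (zb : Fin m → K) (zf : Fin n → K)
    (b : K) :
    Dfun zb (Fin.snoc zf b) =
      Dfun zb zf * ((∏ j, (b - zf j)) / (∏ i, (zb i - b))) := by
  unfold Dfun
  have hf : (∏ q ∈ Finset.univ.filter (fun q : Fin (n+1) × Fin (n+1) => q.1 < q.2),
      ((Fin.snoc zf b : Fin (n+1) → K) q.2 - (Fin.snoc zf b : Fin (n+1) → K) q.1)) =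
      (∏ q ∈ Finset.univ.filter (fun q : Fin n × Fin n => q.1 < q.2), (zf q.2 - zf q.1)) *
        ∏ j, (b - zf j) := by
    rw [pairs_eq (fun i j => (Fin.snoc zf b : Fin (n+1) → K) j - (Fin.snoc zf b : Fin (n+1) → K) i), pairs_snoc]
    simp only [Fin.snoc_castSucc, Fin.snoc_last]
    rw [← pairs_eq (fun i j => zf j - zf i)]
  have hd : (∏ i, ∏ j : Fin (n+1), (zb i - (Fin.snoc zf b : Fin (n+1) → K) j)) =
      (∏ i, ∏ j, (zb i - zf j)) * ∏ i, (zb i - b) := by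
    simp only [Fin.prod_univ_castSucc, Fin.snoc_castSucc, Fin.snoc_last,
      Finset.prod_mul_distrib]
  rw [hf, hd]
  simp only [div_eq_mul_inv, mul_inv]
  ring


/-- Appending `α` to the first list and `β` to the second list:
`D(b,α;f) · D(b;f,β) = (z_α − z_β) · D(b;f) · D(b,α;f,β)`. -/
theorem Dfun_append_mixed {K : Type*} [Field K] {m n : ℕ}
    (zb : Fin m → K) (zf : Fin n → K) (zα zβ : K)
    (hbf : ∀ i j, zb i ≠ zf j) (hαf : ∀ j, zα ≠ zf j) (hbβ : ∀ i, zb i ≠ zβ)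
    (hαβ : zα ≠ zβ) :
    Dfun (Fin.snoc zb zα) zf * Dfun zb (Fin.snoc zf zβ) =
      (zα - zβ) * (Dfun zb zf * Dfun (Fin.snoc zb zα) (Fin.snoc zf zβ)) := by
  have e1 := Dfun_snoc_fst zb zf zα
  have e2 := Dfun_snoc_snd zb zf zβ
  have e3 : Dfun (Fin.snoc zb zα) (Fin.snoc zf zβ) =
      Dfun zb zf * ((∏ j, (zβ - zf j)) / (∏ i, (zb i - zβ))) *
        ((∏ i, (zb i - zα)) / ((∏ j, (zα - zf j)) * (zα - zβ))) := by
    rw [Dfun_snoc_fst, Dfun_snoc_snd]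
    congr 1
    congr 1
    rw [Fin.prod_univ_castSucc]
    simp [Fin.snoc_castSucc, Fin.snoc_last]
  rw [e1, e2, e3]
  have hP : (∏ j, (zα - zf j)) ≠ 0 :=
    Finset.prod_ne_zero_iff.mpr fun j _ => sub_ne_zero.mpr (hαf j)
  have hQ : (∏ i, (zb i - zβ)) ≠ 0 :=
    Finset.prod_ne_zero_iff.mpr fun i _ => sub_ne_zero.mpr (hbβ i)
  have hαβ' : zα - zβ ≠ 0 := sub_ne_zero.mpr hαβ
  field_simp
end

section
/- Rank-deficiency of the conserved-quantity matrix: Let S be a finite set with |S| = N, and for each I ∈ S let c_I, w_I ∈ K be scalars and f_I, g_I : K → K functions. For s ∈ ℤ and x ∈ K define T(s', u) := Σ_{I∈S} c_I w_I^{s'} f_I(u q^{−s'}) g_I(u q^{s'}), where q ∈ K is a fixed nonzero element. Then for any s ∈ ℤ and x ∈ K, the (N+1)×(N+1) matrix M with entries M_{ij} = T(s+i+j, x q^{i−j}) for i,j ∈ {1,…,N+1} has determinant zero. -/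
/-- **Rank deficiency of the conserved-quantity matrix.** Let `S` be a finite set of
cardinality `N` (modelled by `Fin N`), and for each `I` let `c_I, w_I ∈ K` (with `w_I ≠ 0`)
and `f_I, g_I : K → K`. Define
`T(s', u) = Σ_I c_I w_I^{s'} f_I(u q^{−s'}) g_I(u q^{s'})` for a fixed nonzero `q`. Then for
any `s ∈ ℤ` and `x ∈ K`, the `(N+1) × (N+1)` matrix with entries
`M_{ij} = T(s + i + j, x q^{i−j})`, `i, j ∈ {1,…,N+1}`, has determinant zero. -/
theorem conserved_matrix_det_zero {K : Type*} [Field K] {N : ℕ}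
    (q : K) (hq : q ≠ 0) (c w : Fin N → K) (hw : ∀ I, w I ≠ 0)
    (f g : Fin N → K → K) (T : ℤ → K → K)
    (hT : ∀ (s' : ℤ) (u : K),
        T s' u = ∑ I, c I * w I ^ s' * f I (u * q ^ (-s')) * g I (u * q ^ s'))
    (s : ℤ) (x : K) :
    (Matrix.of fun i j : Fin (N + 1) =>
        T (s + ((i : ℕ) + 1 : ℤ) + ((j : ℕ) + 1 : ℤ))
          (x * q ^ (((i : ℕ) : ℤ) - ((j : ℕ) : ℤ)))).det = 0 := by
  set A : Matrix (Fin (N + 1)) (Fin N) K :=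
    Matrix.of fun i I =>
      c I * w I ^ (s + ((i : ℕ) + 1 : ℤ)) * g I (x * q ^ (s + 2 + 2 * ((i : ℕ) : ℤ))) with hA
  set B : Matrix (Fin N) (Fin (N + 1)) K :=
    Matrix.of fun I j =>
      w I ^ (((j : ℕ) + 1 : ℤ)) * f I (x * q ^ (-s - 2 - 2 * ((j : ℕ) : ℤ))) with hB
  have hM : (Matrix.of fun i j : Fin (N + 1) =>
      T (s + ((i : ℕ) + 1 : ℤ) + ((j : ℕ) + 1 : ℤ))
        (x * q ^ (((i : ℕ) : ℤ) - ((j : ℕ) : ℤ)))) = A * B := by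
    ext i j
    rw [Matrix.mul_apply, Matrix.of_apply, hT]
    apply Finset.sum_congr rfl
    intro I _
    simp only [hA, hB, Matrix.of_apply]
    have e1 : x * q ^ (((i : ℕ) : ℤ) - ((j : ℕ) : ℤ)) *
        q ^ (-(s + ((i : ℕ) + 1 : ℤ) + ((j : ℕ) + 1 : ℤ))) =
        x * q ^ (-s - 2 - 2 * ((j : ℕ) : ℤ)) := by
      rw [mul_assoc, ← zpow_add₀ hq]
      ring_nf
    have e2 : x * q ^ (((i : ℕ) : ℤ) - ((j : ℕ) : ℤ)) *
        q ^ (s + ((i : ℕ) + 1 : ℤ) + ((j : ℕ) + 1 : ℤ)) =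
        x * q ^ (s + 2 + 2 * ((i : ℕ) : ℤ)) := by
      rw [mul_assoc, ← zpow_add₀ hq]
      ring_nf
    have e3 : w I ^ (s + ((i : ℕ) + 1 : ℤ) + ((j : ℕ) + 1 : ℤ)) =
        w I ^ (s + ((i : ℕ) + 1 : ℤ)) * w I ^ (((j : ℕ) + 1 : ℤ)) := by
      rw [← zpow_add₀ (hw I)]
    rw [e1, e2, e3]
    ring
  rw [hM]
  by_contra hdet
  have hrank : (A * B).rank = N + 1 := by
    rw [Matrix.rank_of_isUnit _ ((A * B).isUnit_iff_isUnit_det.mpr (Ne.isUnit hdet))]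
    simp
  have hle : (A * B).rank ≤ N :=
    le_trans (Matrix.rank_mul_le_left A B) (le_trans (A.rank_le_card_width) (by simp))
  omega
end

section
/- Gauge/level invariance of the transfer-matrix summand: Let K be a field, q, z_i, z_j ∈ K, and let Q_I, Q_{Ii}, Q_{Ij}, Q_{Iij} : K → K satisfy the bosonic QQ-relation (z_i − z_j) Q_I(u) Q_{Iij}(u) = z_i Q_{Ii}(uq) Q_{Ij}(uq^{−1}) − z_j Q_{Ii}(uq^{−1}) Q_{Ij}(uq) for all u. Then for every u at which all denominators below are nonzero: z_i Q_I(uq^{−1}) Q_{Ii}(uq²) / (Q_I(uq) Q_{Ii}(u)) + z_j Q_{Ii}(uq^{−2}) Q_{Iij}(uq) / (Q_{Ii}(u) Q_{Iij}(uq^{−1})) = z_j Q_I(uq^{−1}) Q_{Ij}(uq²) / (Q_I(uq) Q_{Ij}(u)) + z_i Q_{Ij}(uq^{−2}) Q_{Iij}(uq) / (Q_{Ij}(u) Q_{Iij}(uq^{−1})). -/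
/-- **Gauge/level invariance of the transfer-matrix summand.** Given the bosonic
QQ-relation
`(zᵢ − zⱼ) Q_I(u) Q_{Iij}(u) = zᵢ Q_{Ii}(uq) Q_{Ij}(uq⁻¹) − zⱼ Q_{Ii}(uq⁻¹) Q_{Ij}(uq)`
for all `u`, and nonvanishing of the relevant denominators, one has
`zᵢ Q_I(uq⁻¹) Q_{Ii}(uq²)/(Q_I(uq) Q_{Ii}(u)) + zⱼ Q_{Ii}(uq⁻²) Q_{Iij}(uq)/(Q_{Ii}(u) Q_{Iij}(uq⁻¹))
 = zⱼ Q_I(uq⁻¹) Q_{Ij}(uq²)/(Q_I(uq) Q_{Ij}(u)) + zᵢ Q_{Ij}(uq⁻²) Q_{Iij}(uq)/(Q_{Ij}(u) Q_{Iij}(uq⁻¹))`. -/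
theorem summand_gauge_invariance {K : Type*} [Field K]
    (q zi zj : K) (hq : q ≠ 0) (QI QIi QIj QIij : K → K)
    (hrel : ∀ u, (zi - zj) * QI u * QIij u =
        zi * QIi (u * q) * QIj (u * q⁻¹) - zj * QIi (u * q⁻¹) * QIj (u * q))
    (u : K)
    (h1 : QI (u * q) ≠ 0) (h2 : QIi u ≠ 0) (h3 : QIj u ≠ 0) (h4 : QIij (u * q⁻¹) ≠ 0) :
    zi * QI (u * q⁻¹) * QIi (u * q * q) / (QI (u * q) * QIi u) +
        zj * QIi (u * q⁻¹ * q⁻¹) * QIij (u * q) / (QIi u * QIij (u * q⁻¹)) =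
      zj * QI (u * q⁻¹) * QIj (u * q * q) / (QI (u * q) * QIj u) +
        zi * QIj (u * q⁻¹ * q⁻¹) * QIij (u * q) / (QIj u * QIij (u * q⁻¹)) := by
  have e1 : u * q * q⁻¹ = u := by field_simp
  have e2 : u * q⁻¹ * q = u := by field_simp
  have h5 := hrel (u * q)
  have h6 := hrel (u * q⁻¹)
  rw [e1] at h5
  rw [e2] at h6
  generalize QI (u * q⁻¹) = a0 at *
  generalize QI (u * q) = a1 at *
  generalize QIi (u * q * q) = b2 at *
  generalize QIi u = b0 at *
  generalize QIi (u * q⁻¹ * q⁻¹) = b1 at *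
  generalize QIj (u * q * q) = c2 at *
  generalize QIj u = c0 at *
  generalize QIj (u * q⁻¹ * q⁻¹) = c1 at *
  generalize QIij (u * q) = d1 at *
  generalize QIij (u * q⁻¹) = d0 at *
  field_simp
  linear_combination (a1 * d1) * h6 - (a0 * d0) * h5
end
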